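/- arXiv:2203.05693 — 7 statements merged into one kernel-verified Lean document; each statement's English description precedes it below -/
import Mathlib

section
/- For every odd integer n ≥ 3 there exists a linear functional E on the real polynomial ring ℝ[x_1,…,x_n] such that: (i) E(1) = 1; (ii) E((x_i² − 1)·p) = 0 for every i ∈ {1,…,n} and every polynomial p of total degree at most n − 3; (iii) E(p²) ≥ 0 for every polynomial p of total degree at most (n−1)/2; and (iv) there is no function μ : {−1,1}^n → ℝ with μ(x) ≥ 0 for all x and ∑_{x ∈ {−1,1}^n} μ(x) = 1 satisfying E(p) = ∑_{x ∈ {−1,1}^n} μ(x)·p(x) for every polynomial p of total degree at most n − 1. -/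
open MvPolynomial Finset

namespace GLaux

variable {n : ℕ}

noncomputable def cube (n : ℕ) : Finset (Fin n → ℝ) :=
  Fintype.piFinset fun _ => ({-1, 1} : Finset ℝ)

lemma mem_cube_iff {x : Fin n → ℝ} : x ∈ cube n ↔ ∀ i, x i = -1 ∨ x i = 1 := by
  simp [cube, Fintype.mem_piFinset]

lemma sq_one {x : Fin n → ℝ} (hx : x ∈ cube n) (i : Fin n) : x i * x i = 1 := by
  rcases mem_cube_iff.mp hx i with h | h <;> rw [h] <;> norm_num

lemma factor (f : Fin n → ℝ → ℝ) :
    ∑ x ∈ cube n, ∏ i, f i (x i) = ∏ i, (f i (-1) + f i 1) := by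
  rw [cube, ← Finset.prod_univ_sum]
  exact Finset.prod_congr rfl fun i _ => by
    rw [Finset.sum_pair (by norm_num : (-1:ℝ) ≠ 1)]

lemma sum_prod_subsets (z : Fin n → ℝ) :
    ∑ S : Finset (Fin n), ∏ i ∈ S, z i = ∏ i, (1 + z i) := by
  have h := Finset.prod_add z (fun _ => (1:ℝ)) Finset.univ
  simp only [Finset.prod_const_one, mul_one, Finset.powerset_univ] at h
  rw [← h]
  exact Finset.prod_congr rfl fun i _ => by ring

lemma chi_pointwise {x y : Fin n → ℝ} (hx : x ∈ cube n) (hy : y ∈ cube n) :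
    ∑ S : Finset (Fin n), ∏ i ∈ S, (x i * y i) = if x = y then (2:ℝ)^n else 0 := by
  rw [sum_prod_subsets]
  by_cases h : x = y
  · subst h
    rw [if_pos rfl, Finset.prod_congr rfl
      (fun i _ => by rw [sq_one hx i] : ∀ i ∈ Finset.univ, (1 + x i * x i) = 1 + 1)]
    norm_num
  · rw [if_neg h]
    obtain ⟨i, hi⟩ : ∃ i, x i ≠ y i := by
      by_contra hc; push_neg at hc; exact h (funext hc)
    apply Finset.prod_eq_zero (Finset.mem_univ i)
    rcases mem_cube_iff.mp hx i with h1 | h1 <;> rcases mem_cube_iff.mp hy i with h2 | h2 <;>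
      first
        | (exact absurd (h1.trans h2.symm) hi)
        | (rw [h1, h2]; norm_num)

lemma chi_orthogonal (S T : Finset (Fin n)) :
    ∑ x ∈ cube n, (∏ i ∈ S, x i) * ∏ i ∈ T, x i = if S = T then (2:ℝ)^n else 0 := by
  have key : ∀ x : Fin n → ℝ, (∏ i ∈ S, x i) * ∏ i ∈ T, x i
      = ∏ i, ((if i ∈ S then x i else 1) * (if i ∈ T then x i else 1)) := by
    intro x
    rw [Finset.prod_mul_distrib, Finset.prod_ite_mem Finset.univ S (fun i => x i),
      Finset.prod_ite_mem Finset.univ T (fun i => x i), Finset.univ_inter, Finset.univ_inter]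
  rw [Finset.sum_congr rfl fun x _ => key x,
    factor (fun i a => (if i ∈ S then a else 1) * (if i ∈ T then a else 1))]
  by_cases h : S = T
  · subst h
    rw [if_pos rfl, Finset.prod_congr rfl (fun i _ => by split_ifs <;> norm_num :
      ∀ i ∈ Finset.univ,
        ((if i ∈ S then (-1:ℝ) else 1) * (if i ∈ S then (-1:ℝ) else 1)
          + (if i ∈ S then (1:ℝ) else 1) * (if i ∈ S then (1:ℝ) else 1)) = 2)]
    simp
  · rw [if_neg h]
    obtain ⟨i, hi⟩ : ∃ i, ¬ (i ∈ S ↔ i ∈ T) := by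
      by_contra hc; push_neg at hc; exact h (Finset.ext hc)
    apply Finset.prod_eq_zero (Finset.mem_univ i)
    by_cases h1 : i ∈ S <;> by_cases h2 : i ∈ T <;> simp [h1, h2] at hi ⊢

noncomputable def four (p : MvPolynomial (Fin n) ℝ) (S : Finset (Fin n)) : ℝ :=
  (∑ x ∈ cube n, eval x p * ∏ i ∈ S, x i) / 2 ^ n

lemma inversion (p : MvPolynomial (Fin n) ℝ) {y : Fin n → ℝ} (hy : y ∈ cube n) :
    eval y p = ∑ S : Finset (Fin n), four p S * ∏ i ∈ S, y i := by
  have h2 : (2:ℝ)^n ≠ 0 := by positivity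
  have step1 : ∀ S : Finset (Fin n), four p S * ∏ i ∈ S, y i
      = (∑ x ∈ cube n, eval x p * ∏ i ∈ S, (x i * y i)) / 2 ^ n := by
    intro S
    rw [four, div_mul_eq_mul_div, Finset.sum_mul]
    congr 1
    exact Finset.sum_congr rfl fun x _ => by
      rw [Finset.prod_mul_distrib, mul_assoc]
  rw [Finset.sum_congr rfl fun S _ => step1 S, ← Finset.sum_div, Finset.sum_comm]
  have step2 : ∀ x ∈ cube n, ∑ S : Finset (Fin n), eval x p * ∏ i ∈ S, (x i * y i)
      = eval x p * (if x = y then (2:ℝ)^n else 0) := by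
    intro x hx
    rw [← Finset.mul_sum, chi_pointwise hx hy]
  rw [Finset.sum_congr rfl step2, Finset.sum_eq_single_of_mem y hy
    (fun b _ hb => by rw [if_neg hb, mul_zero])]
  rw [if_pos rfl, mul_div_assoc, div_self h2, mul_one]

lemma four_eq_zero {p : MvPolynomial (Fin n) ℝ} {D : ℕ} (hp : p.totalDegree ≤ D)
    {S : Finset (Fin n)} (hS : D < S.card) : four p S = 0 := by
  have hmain : ∑ x ∈ cube n, eval x p * ∏ i ∈ S, x i = 0 := by
    have step1 : ∀ x : Fin n → ℝ, eval x p * ∏ i ∈ S, x i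
        = ∑ d ∈ p.support, coeff d p * ∏ i, (x i ^ d i * if i ∈ S then x i else 1) := by
      intro x
      rw [eval_eq', Finset.sum_mul]
      refine Finset.sum_congr rfl fun d _ => ?_
      rw [mul_assoc]
      congr 1
      rw [Finset.prod_mul_distrib, Finset.prod_ite_mem Finset.univ S (fun i => x i),
        Finset.univ_inter]
    rw [Finset.sum_congr rfl fun x _ => step1 x, Finset.sum_comm]
    refine Finset.sum_eq_zero fun d hd => ?_
    rw [← Finset.mul_sum,
      factor (fun i a => a ^ d i * if i ∈ S then a else 1)]
    obtain ⟨i0, hi0S, hdi0⟩ : ∃ i ∈ S, d i = 0 := by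
      by_contra hc; push_neg at hc
      have h1 : S.card ≤ ∑ i ∈ S, d i := by
        calc S.card = ∑ _i ∈ S, 1 := by simp
        _ ≤ ∑ i ∈ S, d i := Finset.sum_le_sum fun i hi => Nat.one_le_iff_ne_zero.mpr (hc i hi)
      have h2 : ∑ i ∈ S, d i ≤ ∑ i, d i :=
        Finset.sum_le_sum_of_subset (Finset.subset_univ S)
      have h3 : ∑ i, d i = d.sum fun _ e => e := (Finsupp.sum_fintype d (fun _ e => e) (fun _ => rfl)).symm
      have h4 : (d.sum fun _ e => e) ≤ p.totalDegree := le_totalDegree hd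
      omega
    refine mul_eq_zero_of_right _ (Finset.prod_eq_zero (Finset.mem_univ i0) ?_)
    rw [hdi0, if_pos hi0S, if_pos hi0S]
    norm_num
  rw [four, hmain, zero_div]

lemma parseval (p : MvPolynomial (Fin n) ℝ) :
    ∑ x ∈ cube n, (eval x p)^2 = 2^n * ∑ S : Finset (Fin n), (four p S)^2 := by
  have step1 : ∀ x ∈ cube n, (eval x p)^2
      = ∑ S : Finset (Fin n), ∑ T : Finset (Fin n),
          four p S * four p T * ((∏ i ∈ S, x i) * ∏ i ∈ T, x i) := by
    intro x hx
    rw [sq, inversion p hx, Finset.sum_mul_sum]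
    exact Finset.sum_congr rfl fun S _ => Finset.sum_congr rfl fun T _ => by ring
  rw [Finset.sum_congr rfl step1, Finset.sum_comm]
  have step2 : ∀ S : Finset (Fin n),
      ∑ x ∈ cube n, ∑ T : Finset (Fin n),
          four p S * four p T * ((∏ i ∈ S, x i) * ∏ i ∈ T, x i)
      = (four p S)^2 * 2^n := by
    intro S
    rw [Finset.sum_comm]
    have inner : ∀ T : Finset (Fin n),
        ∑ x ∈ cube n, four p S * four p T * ((∏ i ∈ S, x i) * ∏ i ∈ T, x i)
        = four p S * four p T * (if S = T then (2:ℝ)^n else 0) := by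
      intro T
      rw [← Finset.mul_sum, chi_orthogonal]
    rw [Finset.sum_congr rfl fun T _ => inner T,
      Finset.sum_eq_single_of_mem S (Finset.mem_univ S)
        (fun T _ hT => by rw [if_neg (Ne.symm hT), mul_zero])]
    rw [if_pos rfl]
    ring
  rw [Finset.sum_congr rfl fun S _ => step2 S, ← Finset.sum_mul]
  ring

lemma card_low (m : ℕ) (hn : n = 2 * m + 1) :
    (Finset.univ.filter fun S : Finset (Fin n) => S.card ≤ m).card = 2 ^ (2 * m) := by
  set P := Finset.univ.filter fun S : Finset (Fin n) => S.card ≤ m with hP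
  set Q := Finset.univ.filter fun S : Finset (Fin n) => m + 1 ≤ S.card with hQ
  have hcard : ∀ S : Finset (Fin n), S.card ≤ 2 * m + 1 := by
    intro S
    have hcard := Finset.card_le_univ S
    rw [Fintype.card_fin] at hcard; omega
  have hcompl : P.card = Q.card := by
    refine Finset.card_nbij' (fun S => Sᶜ) (fun S => Sᶜ) ?_ ?_ ?_ ?_
    · intro S hS
      simp only [hP, hQ, Finset.mem_coe, Finset.mem_filter, Finset.mem_univ, true_and] at hS ⊢
      rw [Finset.card_compl, Fintype.card_fin]
      omega
    · intro S hS
      simp only [hP, hQ, Finset.mem_coe, Finset.mem_filter, Finset.mem_univ, true_and] at hS ⊢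
      have := hcard S
      rw [Finset.card_compl, Fintype.card_fin]
      omega
    · intro S _; exact compl_compl S
    · intro S _; exact compl_compl S
  have hdisj : Disjoint P Q := by
    rw [Finset.disjoint_left]
    intro S hSP hSQ
    simp only [hP, hQ, Finset.mem_filter, Finset.mem_univ, true_and] at hSP hSQ
    omega
  have hunion : P ∪ Q = Finset.univ := by
    ext S
    simp only [hP, hQ, Finset.mem_union, Finset.mem_filter, Finset.mem_univ, true_and, iff_true]
    omega
  have htot : P.card + Q.card = 2 ^ (2 * m + 1) := by
    rw [← Finset.card_union_of_disjoint hdisj, hunion, Finset.card_univ,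
      Fintype.card_finset, Fintype.card_fin, hn]
  have hpow : 2 ^ (2 * m + 1) = 2 * 2 ^ (2 * m) := by rw [pow_succ]; ring
  omega


end GLaux

open GLaux

set_option maxHeartbeats 1000000

/-- The Grigoriev–Laurent lower bound: for every odd `n ≥ 3` there is a degree `n - 1`
pseudoexpectation over the hypercube `{±1}ⁿ` that is not the expectation operator of any
probability measure on the hypercube. -/
theorem grigoriev_laurent_lower_bound (n : ℕ) (hn : 3 ≤ n) (hodd : Odd n) :
    ∃ E : MvPolynomial (Fin n) ℝ →ₗ[ℝ] ℝ,
      E 1 = 1 ∧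
      (∀ i : Fin n, ∀ p : MvPolynomial (Fin n) ℝ, p.totalDegree ≤ n - 3 →
        E ((X i ^ 2 - 1) * p) = 0) ∧
      (∀ p : MvPolynomial (Fin n) ℝ, p.totalDegree ≤ (n - 1) / 2 → 0 ≤ E (p ^ 2)) ∧
      ¬ ∃ μ : (Fin n → ℝ) → ℝ,
          (∀ x ∈ Fintype.piFinset (fun _ : Fin n => ({-1, 1} : Finset ℝ)), 0 ≤ μ x) ∧
          (∑ x ∈ Fintype.piFinset (fun _ : Fin n => ({-1, 1} : Finset ℝ)), μ x) = 1 ∧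
          (∀ p : MvPolynomial (Fin n) ℝ, p.totalDegree ≤ n - 1 →
            E p = ∑ x ∈ Fintype.piFinset (fun _ : Fin n => ({-1, 1} : Finset ℝ)),
              μ x * eval x p) := by
  obtain ⟨m, rfl⟩ := hodd
  have hm1 : 1 ≤ m := by omega
  set K : ℝ := 2 ^ (2 * m) - 1 with hKdef
  have h4 : (4:ℝ) ≤ 2 ^ (2*m) := by
    calc (4:ℝ) = 2^2 := by norm_num
    _ ≤ 2^(2*m) := pow_le_pow_right₀ one_le_two (by omega)
  have hK1 : (1:ℝ) ≤ K := by rw [hKdef]; linarith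
  have hK0 : (0:ℝ) < K := lt_of_lt_of_le one_pos hK1
  set o : Fin (2*m+1) → ℝ := fun _ => 1 with hodef
  set mo : Fin (2*m+1) → ℝ := fun _ => -1 with hmodef
  have ho : o ∈ cube (2*m+1) := mem_cube_iff.mpr fun i => Or.inr rfl
  have hmo : mo ∈ cube (2*m+1) := mem_cube_iff.mpr fun i => Or.inl rfl
  have honeq : o ≠ mo := by
    intro h
    have := congrFun h ⟨0, by omega⟩
    rw [hodef, hmodef] at this
    norm_num at this
  set w : (Fin (2*m+1) → ℝ) → ℝ := fun x => if x = o ∨ x = mo then -(1/K) else 1 with hwdef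
  set Z : ℝ := 2 ^ (2*m+1) - 2 - 2/K with hZdef
  have hpow2 : (2:ℝ)^(2*m+1) = 2 * 2^(2*m) := by rw [pow_succ]; ring
  have hZ : 0 < Z := by
    have h2K : 2/K ≤ 2 := by rw [div_le_iff₀ hK0]; linarith
    rw [hZdef]; rw [hpow2]; linarith
  have hfil : (cube (2*m+1)).filter (fun x => x = o ∨ x = mo) = {o, mo} := by
    ext x
    simp only [Finset.mem_filter, Finset.mem_insert, Finset.mem_singleton]
    constructor
    · rintro ⟨-, h⟩; exact h
    · rintro (rfl | rfl)
      exacts [⟨ho, Or.inl rfl⟩, ⟨hmo, Or.inr rfl⟩]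
  have hpaircard : ({-1, 1} : Finset ℝ).card = 2 := by
    rw [Finset.card_insert_of_notMem (by norm_num), Finset.card_singleton]
  have hcardcube : (cube (2*m+1)).card = 2^(2*m+1) := by
    rw [cube, Fintype.card_piFinset]
    simp [hpaircard]
  have split_w : ∀ f : (Fin (2*m+1) → ℝ) → ℝ,
      ∑ x ∈ cube (2*m+1), w x * f x
      = (∑ x ∈ cube (2*m+1), f x) - (1 + 1/K) * (f o + f mo) := by
    intro f
    have hx : ∀ x, w x * f x = f x - (if x = o ∨ x = mo then (1 + 1/K) * f x else 0) := by
      intro x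
      simp only [hwdef]
      split_ifs <;> ring
    rw [Finset.sum_congr rfl fun x _ => hx x, Finset.sum_sub_distrib]
    congr 1
    rw [← Finset.sum_filter, hfil, Finset.sum_pair honeq]
    ring
  refine ⟨{ toFun := fun p => (∑ x ∈ cube (2*m+1), w x * eval x p) / Z,
            map_add' := fun p q => by
              simp only [map_add, mul_add, Finset.sum_add_distrib, add_div]
            map_smul' := fun r p => by
              simp only [smul_eval, smul_eq_mul, RingHom.id_apply]
              rw [Finset.sum_congr rfl fun x _ => mul_left_comm (w x) r (eval x p),
                ← Finset.mul_sum, mul_div_assoc] }, ?_, ?_, ?_, ?_⟩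
  · -- (i) E 1 = 1
    simp only [LinearMap.coe_mk, AddHom.coe_mk]
    have e1 : ∑ x ∈ cube (2*m+1), w x * eval x (1 : MvPolynomial (Fin (2*m+1)) ℝ)
        = ∑ x ∈ cube (2*m+1), w x * 1 := Finset.sum_congr rfl fun x _ => by rw [map_one]
    rw [e1, split_w (fun _ => (1:ℝ)), Finset.sum_const, hcardcube, nsmul_eq_mul, mul_one,
      div_eq_one_iff_eq hZ.ne']
    push_cast
    rw [hZdef]
    ring
  · -- (ii)
    intro i p _
    simp only [LinearMap.coe_mk, AddHom.coe_mk]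
    rw [Finset.sum_eq_zero, zero_div]
    intro x hx
    have h1 : eval x (X i ^ 2 - 1 : MvPolynomial (Fin (2*m+1)) ℝ) = 0 := by
      rw [map_sub, map_pow, eval_X, map_one, pow_two, sq_one hx i, sub_self]
    rw [map_mul, h1, zero_mul, mul_zero]
  · -- (iii)
    intro p hp
    have hdm : p.totalDegree ≤ m := by
      have he : (2*m+1-1)/2 = m := by omega
      rwa [he] at hp
    simp only [LinearMap.coe_mk, AddHom.coe_mk]
    have e1 : ∑ x ∈ cube (2*m+1), w x * eval x (p^2)
        = ∑ x ∈ cube (2*m+1), w x * (eval x p)^2 :=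
      Finset.sum_congr rfl fun x _ => by rw [map_pow]
    rw [e1, split_w (fun x => (eval x p)^2)]
    refine div_nonneg ?_ hZ.le
    set c : Finset (Fin (2*m+1)) → ℝ := four p with hc
    have hPar := parseval p
    have hgo : eval o p = ∑ S : Finset (Fin (2*m+1)), c S := by
      rw [inversion p ho]
      refine Finset.sum_congr rfl fun S _ => ?_
      rw [hodef]
      simp [hc]
    have hgmo : eval mo p = ∑ S : Finset (Fin (2*m+1)), c S * (-1)^S.card := by
      rw [inversion p hmo]
      refine Finset.sum_congr rfl fun S _ => ?_
      rw [hmodef]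
      simp [Finset.prod_const, hc]
    set Se := Finset.univ.filter (fun S : Finset (Fin (2*m+1)) => Even S.card) with hSe
    set So := Finset.univ.filter (fun S : Finset (Fin (2*m+1)) => Odd S.card) with hSo
    have hdisj : Disjoint Se So := by
      rw [Finset.disjoint_left]
      intro S hSP hSQ
      rw [hSe, Finset.mem_filter] at hSP
      rw [hSo, Finset.mem_filter] at hSQ
      exact (Nat.not_odd_iff_even.mpr hSP.2) hSQ.2
    have hunion : Se ∪ So = Finset.univ := by
      ext S
      simp only [hSe, hSo, Finset.mem_union, Finset.mem_filter, Finset.mem_univ, true_and,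
        iff_true]
      exact Nat.even_or_odd S.card
    have hsplitsum : ∀ f : Finset (Fin (2*m+1)) → ℝ,
        ∑ S : Finset (Fin (2*m+1)), f S = (∑ S ∈ Se, f S) + ∑ S ∈ So, f S := by
      intro f
      rw [← Finset.sum_union hdisj, hunion]
    set A := ∑ S ∈ Se, c S with hA
    set B := ∑ S ∈ So, c S with hB
    have hgoAB : eval o p = A + B := by rw [hgo, hsplitsum c]
    have hgmoAB : eval mo p = A - B := by
      rw [hgmo, hsplitsum (fun S => c S * (-1)^S.card)]
      have he : ∑ S ∈ Se, c S * (-1)^S.card = A := by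
        rw [hA]
        refine Finset.sum_congr rfl fun S hS => ?_
        rw [hSe, Finset.mem_filter] at hS
        rw [hS.2.neg_one_pow, mul_one]
      have hoo : ∑ S ∈ So, c S * (-1)^S.card = -B := by
        rw [hB, ← Finset.sum_neg_distrib]
        refine Finset.sum_congr rfl fun S hS => ?_
        rw [hSo, Finset.mem_filter] at hS
        rw [hS.2.neg_one_pow, mul_neg_one]
      rw [he, hoo]
      ring
    -- truncated index sets
    set se := Finset.univ.filter
      (fun S : Finset (Fin (2*m+1)) => Even S.card ∧ S.card ≤ m) with hse
    set so := Finset.univ.filter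
      (fun S : Finset (Fin (2*m+1)) => Odd S.card ∧ S.card ≤ m) with hso
    have hseSe : se ⊆ Se := fun S hS => by
      rw [hse, Finset.mem_filter] at hS
      rw [hSe, Finset.mem_filter]
      exact ⟨hS.1, hS.2.1⟩
    have hsoSo : so ⊆ So := fun S hS => by
      rw [hso, Finset.mem_filter] at hS
      rw [hSo, Finset.mem_filter]
      exact ⟨hS.1, hS.2.1⟩
    have htrA : ∑ S ∈ se, c S = A := by
      rw [hA]
      refine Finset.sum_subset hseSe fun S hS hnS => ?_
      rw [hSe, Finset.mem_filter] at hS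
      have hgt : m < S.card := by
        by_contra hle
        exact hnS (by rw [hse, Finset.mem_filter]; exact ⟨Finset.mem_univ S, hS.2, by omega⟩)
      exact four_eq_zero hdm hgt
    have htrB : ∑ S ∈ so, c S = B := by
      rw [hB]
      refine Finset.sum_subset hsoSo fun S hS hnS => ?_
      rw [hSo, Finset.mem_filter] at hS
      have hgt : m < S.card := by
        by_contra hle
        exact hnS (by rw [hso, Finset.mem_filter]; exact ⟨Finset.mem_univ S, hS.2, by omega⟩)
      exact four_eq_zero hdm hgt
    -- cardinality bounds
    have hdisj' : Disjoint se so := by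
      rw [Finset.disjoint_left]
      intro S hS1 hS2
      rw [hse, Finset.mem_filter] at hS1
      rw [hso, Finset.mem_filter] at hS2
      exact (Nat.not_odd_iff_even.mpr hS1.2.1) hS2.2.1
    have hunion' : se ∪ so = Finset.univ.filter
        (fun S : Finset (Fin (2*m+1)) => S.card ≤ m) := by
      ext S
      simp only [hse, hso, Finset.mem_union, Finset.mem_filter, Finset.mem_univ, true_and]
      rcases Nat.even_or_odd S.card with h | h
      · simp [h, Nat.not_odd_iff_even.mpr h]
      · simp [h, Nat.not_even_iff_odd.mpr h]
    have hcards : se.card + so.card = 2^(2*m) := by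
      rw [← Finset.card_union_of_disjoint hdisj', hunion', card_low m rfl]
    have hsene : (∅ : Finset (Fin (2*m+1))) ∈ se := by
      rw [hse, Finset.mem_filter]
      refine ⟨Finset.mem_univ _, ?_, ?_⟩ <;> simp
    have hsone : ({(⟨0, by omega⟩ : Fin (2*m+1))} : Finset (Fin (2*m+1))) ∈ so := by
      rw [hso, Finset.mem_filter]
      refine ⟨Finset.mem_univ _, ?_, ?_⟩ <;> simp [hm1]
    have hse1 : 1 ≤ se.card := Finset.card_pos.mpr ⟨_, hsene⟩
    have hso1 : 1 ≤ so.card := Finset.card_pos.mpr ⟨_, hsone⟩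
    have hseK : (se.card : ℝ) ≤ K := by
      have hn1 : se.card ≤ 2^(2*m) - 1 := by omega
      have h1 : (1:ℕ) ≤ 2^(2*m) := Nat.one_le_two_pow
      have := (Nat.cast_le (α := ℝ)).mpr hn1
      rw [Nat.cast_sub h1] at this
      push_cast at this
      rw [hKdef]
      convert this using 2
    have hsoK : (so.card : ℝ) ≤ K := by
      have hn1 : so.card ≤ 2^(2*m) - 1 := by omega
      have h1 : (1:ℕ) ≤ 2^(2*m) := Nat.one_le_two_pow
      have := (Nat.cast_le (α := ℝ)).mpr hn1
      rw [Nat.cast_sub h1] at this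
      push_cast at this
      rw [hKdef]
      convert this using 2
    -- Cauchy-Schwarz
    have CSgen : ∀ s : Finset (Finset (Fin (2*m+1))),
        (∑ S ∈ s, c S)^2 ≤ (s.card : ℝ) * ∑ S ∈ s, (c S)^2 := by
      intro s
      have h := Finset.sum_mul_sq_le_sq_mul_sq s (fun _ => (1:ℝ)) c
      simpa using h
    have hsqe : ∑ S ∈ se, (c S)^2 ≤ ∑ S ∈ Se, (c S)^2 :=
      Finset.sum_le_sum_of_subset_of_nonneg hseSe fun S _ _ => sq_nonneg _
    have hsqo : ∑ S ∈ so, (c S)^2 ≤ ∑ S ∈ So, (c S)^2 :=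
      Finset.sum_le_sum_of_subset_of_nonneg hsoSo fun S _ _ => sq_nonneg _
    have hSe2nn : (0:ℝ) ≤ ∑ S ∈ Se, (c S)^2 := Finset.sum_nonneg fun S _ => sq_nonneg _
    have hSo2nn : (0:ℝ) ≤ ∑ S ∈ So, (c S)^2 := Finset.sum_nonneg fun S _ => sq_nonneg _
    have hA2 : A^2 ≤ K * ∑ S ∈ Se, (c S)^2 := by
      rw [← htrA]
      calc (∑ S ∈ se, c S)^2 ≤ (se.card : ℝ) * ∑ S ∈ se, (c S)^2 := CSgen se
      _ ≤ K * ∑ S ∈ Se, (c S)^2 := by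
          apply mul_le_mul hseK hsqe (Finset.sum_nonneg fun S _ => sq_nonneg _) hK0.le
    have hB2 : B^2 ≤ K * ∑ S ∈ So, (c S)^2 := by
      rw [← htrB]
      calc (∑ S ∈ so, c S)^2 ≤ (so.card : ℝ) * ∑ S ∈ so, (c S)^2 := CSgen so
      _ ≤ K * ∑ S ∈ So, (c S)^2 := by
          apply mul_le_mul hsoK hsqo (Finset.sum_nonneg fun S _ => sq_nonneg _) hK0.le
    have h1K : (0:ℝ) < 1 + 1/K := by positivity
    have hKne : K ≠ 0 := hK0.ne'
    have hKK : (1 + 1/K) * K = 2^(2*m) := by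
      field_simp
      rw [hKdef]
      ring
    have hstep1 : (1+1/K) * A^2 ≤ 2^(2*m) * ∑ S ∈ Se, (c S)^2 := by
      calc (1+1/K) * A^2 ≤ (1+1/K) * (K * ∑ S ∈ Se, (c S)^2) :=
            mul_le_mul_of_nonneg_left hA2 h1K.le
      _ = ((1+1/K)*K) * ∑ S ∈ Se, (c S)^2 := by ring
      _ = 2^(2*m) * ∑ S ∈ Se, (c S)^2 := by rw [hKK]
    have hstep2 : (1+1/K) * B^2 ≤ 2^(2*m) * ∑ S ∈ So, (c S)^2 := by
      calc (1+1/K) * B^2 ≤ (1+1/K) * (K * ∑ S ∈ So, (c S)^2) :=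
            mul_le_mul_of_nonneg_left hB2 h1K.le
      _ = ((1+1/K)*K) * ∑ S ∈ So, (c S)^2 := by ring
      _ = 2^(2*m) * ∑ S ∈ So, (c S)^2 := by rw [hKK]
    rw [hPar, hgoAB, hgmoAB, hsplitsum (fun S => (c S)^2), hpow2]
    have hexp : (1+1/K)*((A+B)^2+(A-B)^2) = 2*((1+1/K)*A^2) + 2*((1+1/K)*B^2) := by ring
    linarith [hstep1, hstep2]
  · -- (iv)
    rintro ⟨μ, hμpos, hμsum, hμE⟩
    set q : MvPolynomial (Fin (2*m+1)) ℝ :=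
      ∑ S ∈ Finset.univ.filter (fun S : Finset (Fin (2*m+1)) => Even S.card),
        ∏ i ∈ S, (X i : MvPolynomial (Fin (2*m+1)) ℝ) with hq
    have hdeg : q.totalDegree ≤ 2*m+1-1 := by
      rw [hq]
      refine (totalDegree_finset_sum _ _).trans (Finset.sup_le fun S hS => ?_)
      have h1 : (∏ i ∈ S, (X i : MvPolynomial (Fin (2*m+1)) ℝ)).totalDegree ≤ S.card := by
        refine (totalDegree_finset_prod _ _).trans ?_
        have h2 : ∀ i ∈ S, (X i : MvPolynomial (Fin (2*m+1)) ℝ).totalDegree = 1 :=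
          fun i _ => totalDegree_X i
        rw [Finset.sum_congr rfl h2]
        simp
      have hev : Even S.card := (Finset.mem_filter.mp hS).2
      have hle : S.card ≤ Fintype.card (Fin (2*m+1)) := Finset.card_le_univ S
      rw [Fintype.card_fin] at hle
      obtain ⟨k, hk⟩ := hev
      omega
    have hevalq : ∀ x : Fin (2*m+1) → ℝ, eval x q
        = ∑ S ∈ Finset.univ.filter (fun S : Finset (Fin (2*m+1)) => Even S.card),
            ∏ i ∈ S, x i := by
      intro x
      rw [hq, map_sum]
      refine Finset.sum_congr rfl fun S _ => ?_
      rw [map_prod]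
      exact Finset.prod_congr rfl fun i _ => eval_X i
    have hdouble : ∀ x : Fin (2*m+1) → ℝ,
        2 * (∑ S ∈ Finset.univ.filter (fun S : Finset (Fin (2*m+1)) => Even S.card),
              ∏ i ∈ S, x i)
        = (∏ i, (1 + x i)) + ∏ i, (1 - x i) := by
      intro x
      have hneg : ∀ S : Finset (Fin (2*m+1)), ∏ i ∈ S, (-x i) = (-1)^S.card * ∏ i ∈ S, x i := by
        intro S
        rw [Finset.prod_congr rfl (fun i _ => by ring :
            ∀ i ∈ S, -x i = (-1) * x i)]
        rw [Finset.prod_mul_distrib, Finset.prod_const]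
      have h1 : ∏ i, (1 + x i) = ∑ S : Finset (Fin (2*m+1)), ∏ i ∈ S, x i :=
        (sum_prod_subsets x).symm
      have h2 : ∏ i, (1 - x i) = ∑ S : Finset (Fin (2*m+1)), (-1)^S.card * ∏ i ∈ S, x i := by
        rw [Finset.prod_congr rfl (fun i (_ : i ∈ Finset.univ) => by ring :
            ∀ i ∈ Finset.univ, 1 - x i = 1 + (-x i)),
          ← sum_prod_subsets (fun i => -x i)]
        exact Finset.sum_congr rfl fun S _ => hneg S
      rw [h1, h2, ← Finset.sum_add_distrib, Finset.mul_sum, Finset.sum_filter]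
      refine Finset.sum_congr rfl fun S _ => ?_
      rcases Nat.even_or_odd S.card with he | hodd
      · rw [if_pos he, he.neg_one_pow]; ring
      · rw [if_neg (Nat.not_even_iff_odd.mpr hodd), hodd.neg_one_pow]; ring
    have hTq : ∀ x ∈ cube (2*m+1), eval x q = if x = o ∨ x = mo then (2:ℝ)^(2*m) else 0 := by
      intro x hx
      have hd := hdouble x
      rw [← hevalq x] at hd
      by_cases hxo : x = o
      · rw [hxo] at hd ⊢
        rw [if_pos (Or.inl rfl)]
        have hp1 : ∏ i, (1 + o i) = (2:ℝ)^(2*m+1) := by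
          rw [Finset.prod_congr rfl (fun i _ => by norm_num [hodef] :
            ∀ i ∈ Finset.univ, (1 + o i) = 2)]
          simp
        have hp2 : ∏ i, (1 - o i) = 0 := by
          apply Finset.prod_eq_zero (Finset.mem_univ (⟨0, by omega⟩ : Fin (2*m+1)))
          simp [hodef]
        rw [hp1, hp2, hpow2] at hd
        linarith
      · by_cases hxmo : x = mo
        · rw [hxmo] at hd ⊢
          rw [if_pos (Or.inr rfl)]
          have hp1 : ∏ i, (1 + mo i) = 0 := by
            apply Finset.prod_eq_zero (Finset.mem_univ (⟨0, by omega⟩ : Fin (2*m+1)))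
            simp [hmodef]
          have hp2 : ∏ i, (1 - mo i) = (2:ℝ)^(2*m+1) := by
            rw [Finset.prod_congr rfl (fun i _ => by norm_num [hmodef] :
              ∀ i ∈ Finset.univ, (1 - mo i) = 2)]
            simp
          rw [hp1, hp2, hpow2] at hd
          linarith
        · rw [if_neg (by tauto)]
          obtain ⟨i1, hi1⟩ : ∃ i, x i ≠ o i := by
            by_contra hc; push_neg at hc; exact hxo (funext hc)
          obtain ⟨i2, hi2⟩ : ∃ i, x i ≠ mo i := by
            by_contra hc; push_neg at hc; exact hxmo (funext hc)
          rw [hodef] at hi1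
          rw [hmodef] at hi2
          have hx1 : x i1 = -1 := by rcases mem_cube_iff.mp hx i1 with h | h
                                     · exact h
                                     · exact absurd h hi1
          have hx2 : x i2 = 1 := by rcases mem_cube_iff.mp hx i2 with h | h
                                    · exact absurd h hi2
                                    · exact h
          have hp1 : ∏ i, (1 + x i) = 0 := by
            apply Finset.prod_eq_zero (Finset.mem_univ i1)
            rw [hx1]; ring
          have hp2 : ∏ i, (1 - x i) = 0 := by
            apply Finset.prod_eq_zero (Finset.mem_univ i2)
            rw [hx2]; ring
          rw [hp1, hp2] at hd
          linarith
    have hEq := hμE q hdeg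
    simp only [LinearMap.coe_mk, AddHom.coe_mk] at hEq
    have hpairsub : ({o, mo} : Finset (Fin (2*m+1) → ℝ)) ⊆ cube (2*m+1) := by
      intro x hx
      rcases Finset.mem_insert.mp hx with rfl | hx'
      · exact ho
      · rw [Finset.mem_singleton.mp hx']; exact hmo
    have hsum_two : ∀ g : (Fin (2*m+1) → ℝ) → ℝ,
        ∑ x ∈ cube (2*m+1), g x * eval x q = g o * 2^(2*m) + g mo * 2^(2*m) := by
      intro g
      rw [show ∑ x ∈ cube (2*m+1), g x * eval x q
          = ∑ x ∈ ({o, mo} : Finset (Fin (2*m+1) → ℝ)), g x * eval x q by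
        symm
        apply Finset.sum_subset hpairsub
        intro x hx hnx
        rw [hTq x hx, if_neg, mul_zero]
        intro hor
        apply hnx
        rcases hor with rfl | rfl
        · exact Finset.mem_insert_self _ _
        · exact Finset.mem_insert_of_mem (Finset.mem_singleton_self _)]
      rw [Finset.sum_pair honeq, hTq o ho, hTq mo hmo, if_pos (Or.inl rfl), if_pos (Or.inr rfl)]
    have hLHS : ∑ x ∈ cube (2*m+1), w x * eval x q = -(1/K) * (2^(2*m) + 2^(2*m)) := by
      rw [hsum_two w]
      have hwo : w o = -(1/K) := by simp [hwdef]
      have hwmo : w mo = -(1/K) := by simp [hwdef]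
      rw [hwo, hwmo]
      ring
    have hRHS : ∑ x ∈ Fintype.piFinset (fun _ : Fin (2*m+1) => ({-1,1} : Finset ℝ)),
        μ x * eval x q = μ o * 2^(2*m) + μ mo * 2^(2*m) := hsum_two μ
    rw [hRHS, hLHS] at hEq
    have hμo : 0 ≤ μ o := hμpos o ho
    have hμmo : 0 ≤ μ mo := hμpos mo hmo
    have hppos : (0:ℝ) < 2^(2*m) := by positivity
    have hneg : -(1/K) * (2^(2*m) + 2^(2*m)) / Z < 0 := by
      apply div_neg_of_neg_of_pos _ hZ
      have : 0 < (1/K) * (2^(2*m) + 2^(2*m)) := by positivity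
      linarith
    nlinarith [mul_nonneg hμo hppos.le, mul_nonneg hμmo hppos.le]
end

section
/- For n ≥ 4 and 1 ≤ d with 2d ≤ n − 1, the explicit eigenvalue formulas satisfy the recursion λ_{n,d} = (n/(n−1)) · λ_{n−2,d−1}, where λ_{m,d} = m! · ∑_{k=d}^{⌊m/2⌋} [ a_{m,k−d}² / ((m−d−k)!·(k−d)!) ] · ∏_{i=0}^{d−1} 1/(m−2i−1−k+d)². -/
private lemma gl_poly (x : ℝ) (t : ℕ) :
    (x - 1) * ∏ i ∈ Finset.range t, (x - 2 * i - 3)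
      = (x - 2 * t - 1) * ∏ i ∈ Finset.range t, (x - 2 * i - 1) := by
  induction t with
  | zero => norm_num
  | succ t ih =>
    rw [Finset.prod_range_succ, Finset.prod_range_succ]
    push_cast
    push_cast at ih
    linear_combination (x - 2 * t - 3) * ih



/-- The explicit eigenvalue formulas for the Grigoriev–Laurent pseudomoment matrices satisfy
the recursion `λ_{n,d} = (n/(n−1)) · λ_{n−2,d−1}` for `n ≥ 4` and `1 ≤ d` with `2d ≤ n − 1`. -/
theorem grigoriev_laurent_eigenvalue_recursion (n d : ℕ) (hn : 4 ≤ n) (hd : 1 ≤ d)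
    (hdn : 2 * d ≤ n - 1)
    (a : ℕ → ℕ → ℝ)
    (ha : ∀ m k, a m k = if Odd k then 0 else
      (-1) ^ (k / 2) * ∏ i ∈ Finset.range (k / 2), (2 * i + 1 : ℝ) / ((m : ℝ) - 2 * i - 1))
    (lam : ℕ → ℕ → ℝ)
    (hlam : ∀ m e, lam m e = (m.factorial : ℝ) *
      ∑ k ∈ Finset.Icc e (m / 2),
        a m (k - e) ^ 2 / (((m - e - k).factorial * (k - e).factorial : ℕ) : ℝ) *
          ∏ i ∈ Finset.range e, 1 / ((m : ℝ) - 2 * i - 1 - k + e) ^ 2) :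
    lam n d = ((n : ℝ) / ((n : ℝ) - 1)) * lam (n - 2) (d - 1) := by
  obtain ⟨m, rfl⟩ : ∃ m, n = m + 2 := ⟨n - 2, by omega⟩
  obtain ⟨e, rfl⟩ : ∃ e, d = e + 1 := ⟨d - 1, by omega⟩
  have hm : 2 ≤ m := by omega
  have hem : 2 * e ≤ m - 1 := by omega
  have key : ∀ j : ℕ, 2 * j ≤ m →
      ((m : ℝ) + 1) * a (m + 2) j = ((m : ℝ) + 1 - j) * a m j := by
    intro j hj
    rcases Nat.even_or_odd j with ⟨t, rfl⟩ | ho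
    · have ht2 : (t + t) / 2 = t := by omega
      have hnotodd : ¬ Odd (t + t) := Nat.not_odd_iff_even.mpr ⟨t, rfl⟩
      rw [ha, ha, if_neg hnotodd, if_neg hnotodd, ht2]
      rw [Finset.prod_div_distrib, Finset.prod_div_distrib]
      have hD1 : ∏ i ∈ Finset.range t, (((m + 2 : ℕ) : ℝ) - 2 * i - 1) ≠ 0 := by
        refine Finset.prod_ne_zero_iff.mpr fun i hi => ?_
        have hi' := Finset.mem_range.mp hi
        have h : (2 * i + 1 : ℕ) < m + 2 := by omega
        have h2 : ((2 * i + 1 : ℕ) : ℝ) < ((m + 2 : ℕ) : ℝ) := Nat.cast_lt.mpr h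
        push_cast at h2 ⊢
        intro hc; linarith
      have hD2 : ∏ i ∈ Finset.range t, ((m : ℝ) - 2 * i - 1) ≠ 0 := by
        refine Finset.prod_ne_zero_iff.mpr fun i hi => ?_
        have hi' := Finset.mem_range.mp hi
        have h : (2 * i + 1 : ℕ) < m := by omega
        have h2 : ((2 * i + 1 : ℕ) : ℝ) < (m : ℝ) := Nat.cast_lt.mpr h
        push_cast at h2 ⊢
        intro hc; linarith
      have hpoly := gl_poly ((m:ℝ) + 2) t
      have hp0 : ∏ i ∈ Finset.range t, ((m:ℝ) + 2 - 2 * i - 3)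
          = ∏ i ∈ Finset.range t, ((m : ℝ) - 2 * i - 1) :=
        Finset.prod_congr rfl fun i _ => by ring
      rw [hp0] at hpoly
      push_cast at hD1 ⊢
      field_simp
      linear_combination hpoly
    · rw [ha, ha, if_pos ho, if_pos ho]; ring
  simp only [Nat.add_sub_cancel]
  rw [hlam, hlam]
  have hIcc : Finset.Icc (e+1) ((m+2)/2) =
      (Finset.Icc e (m/2)).map (addRightEmbedding 1) := by
    rw [Finset.map_add_right_Icc]; congr 1; omega
  rw [hIcc, Finset.sum_map]
  simp only [Finset.mul_sum]
  refine Finset.sum_congr rfl fun k hk => ?_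
  obtain ⟨hke, hkm⟩ := Finset.mem_Icc.mp hk
  simp only [addRightEmbedding_apply]
  have h1 : m + 2 - (e+1) - (k+1) = m - e - k := by omega
  have h2 : k + 1 - (e+1) = k - e := by omega
  rw [h1, h2, Finset.prod_range_succ']
  have hp : (∏ i ∈ Finset.range e,
        1 / (((m+2 : ℕ) : ℝ) - 2 * (↑(i+1) : ℝ) - 1 - ((k+1 : ℕ) : ℝ) + ((e+1 : ℕ) : ℝ)) ^ 2)
      = ∏ i ∈ Finset.range e, 1 / ((m : ℝ) - 2 * i - 1 - k + e) ^ 2 :=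
    Finset.prod_congr rfl fun i _ => by push_cast; ring_nf
  rw [hp]
  have hkj : ((k - e : ℕ) : ℝ) = (k : ℝ) - e := by
    push_cast [Nat.cast_sub hke]; ring
  have hkey := key (k - e) (by omega)
  rw [hkj] at hkey
  have hkeysq : ((m:ℝ)+1)^2 * a (m+2) (k-e)^2
      = ((m:ℝ)+1-((k:ℝ)-e))^2 * a m (k-e)^2 := by
    linear_combination (((m:ℝ)+1) * a (m+2) (k-e) + ((m:ℝ)+1-((k:ℝ)-e)) * a m (k-e)) * hkey
  have hfac : (((m+2).factorial : ℕ) : ℝ) = ((m:ℝ)+2) * ((m:ℝ)+1) * m.factorial := by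
    rw [show m+2 = (m+1)+1 from rfl, Nat.factorial_succ, Nat.factorial_succ]
    push_cast; ring
  have hF : ((((m - e - k).factorial * (k - e).factorial : ℕ)) : ℝ) ≠ 0 :=
    Nat.cast_ne_zero.mpr (Nat.mul_ne_zero (Nat.factorial_ne_zero _) (Nat.factorial_ne_zero _))
  have hkm' : (k : ℝ) ≤ (m : ℝ) := Nat.cast_le.mpr (by omega)
  have he' : (0:ℝ) ≤ (e : ℝ) := Nat.cast_nonneg e
  have hm1 : (m:ℝ) + 1 ≠ 0 := by positivity
  have hZ : (m:ℝ) + 1 - ((k:ℝ) - e) ≠ 0 := by intro h; linarith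
  have hP : (∏ x ∈ Finset.range e, ((m:ℝ) - 2 * x - 1 - k + e) ^ 2) ≠ 0 := by
    refine Finset.prod_ne_zero_iff.mpr fun x hx => ?_
    have hx' := Finset.mem_range.mp hx
    have h : (k + 2 * x + 1 : ℕ) < m + e := by omega
    have h2 : ((k + 2 * x + 1 : ℕ) : ℝ) < ((m + e : ℕ) : ℝ) := Nat.cast_lt.mpr h
    push_cast at h2
    have : (m:ℝ) - 2 * x - 1 - k + e > 0 := by linarith
    positivity
  have hZ2 : ((m:ℝ) + 2 - 1 - ((k:ℝ) + 1) + ((e:ℝ) + 1)) ≠ 0 := by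
    intro h; exact hZ (by linarith)
  have hm2 : ((m:ℝ) + 2 - 1) ≠ 0 := by intro h; exact hm1 (by linarith)
  rw [hfac]
  push_cast
  field_simp
  rw [div_eq_iff (pow_ne_zero 2 (by intro h; exact hZ (by linarith)))]
  linear_combination (∏ x ∈ Finset.range e, 1 / ((m:ℝ) - 2 * x - 1 - k + e) ^ 2) * hkeysq
end

section
/- Let n = 2m be an even positive integer, let B = {x ∈ {−1,1}^n : x_1 + ⋯ + x_n = 0}, and let S ⊆ {1,…,n}. Then |B| = C(n,m); moreover ∑_{x ∈ B} ∏_{i ∈ S} x_i = 0 if |S| is odd, and C(n,|S|) · ∑_{x ∈ B} ∏_{i ∈ S} x_i = (−1)^{|S|/2} · C(m, |S|/2) · C(n,m) if |S| is even. -/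
open Finset Polynomial

lemma aux_card_pos (n m : ℕ) (hnm : n = 2 * m) (x : Fin n → ℝ)
    (hx : ∀ i, x i = -1 ∨ x i = 1) (hs : ∑ i, x i = 0) :
    (Finset.univ.filter (fun i => x i = 1)).card = m := by
  set P := Finset.univ.filter (fun i => x i = 1) with hP
  have h1 : ∑ i ∈ P, x i = (P.card : ℝ) := by
    rw [Finset.sum_congr rfl (fun i hi => (Finset.mem_filter.mp hi).2)]
    simp [hP]
  have h2 : ∑ i ∈ Pᶜ, x i = -(Pᶜ.card : ℝ) := by
    have : ∀ i ∈ Pᶜ, x i = -1 := by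
      intro i hi
      rcases hx i with h | h
      · exact h
      · exact absurd (by simp [hP, h] : i ∈ P) (Finset.mem_compl.mp hi)
    rw [Finset.sum_congr rfl this]
    simp
  have hsplit : ∑ i ∈ P, x i + ∑ i ∈ Pᶜ, x i = 0 := by
    rw [Finset.sum_add_sum_compl]; exact hs
  rw [h1, h2] at hsplit
  have hcc : P.card + Pᶜ.card = n := by
    rw [Finset.card_add_card_compl]; simp
  have h3 : (P.card : ℝ) = (Pᶜ.card : ℝ) := by linarith
  have h4 : P.card = Pᶜ.card := Nat.cast_injective h3
  omega

lemma aux_esymm (n m s : ℕ) (hnm : n = 2 * m) (hs : s ≤ n) (hse : Even s)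
    (x : Fin n → ℝ) (hx : ∀ i, x i = -1 ∨ x i = 1) (hsum : ∑ i, x i = 0) :
    ∑ T ∈ (Finset.univ : Finset (Fin n)).powersetCard s, ∏ i ∈ T, x i
      = (-1) ^ (s / 2) * (m.choose (s / 2) : ℝ) := by
  obtain ⟨t, ht⟩ := hse
  set p : Polynomial ℝ := ∏ i, (Polynomial.C (x i) * Polynomial.X + 1) with hp
  -- coefficient s of p is the elementary symmetric sum
  have hcoeff1 : p.coeff s = ∑ T ∈ (Finset.univ : Finset (Fin n)).powersetCard s, ∏ i ∈ T, x i := by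
    rw [hp, Finset.prod_add]
    have h1 : ∀ T ∈ (Finset.univ : Finset (Fin n)).powerset,
        (∏ i ∈ T, Polynomial.C (x i) * Polynomial.X) * ∏ i ∈ Finset.univ \ T, (1 : Polynomial ℝ)
        = Polynomial.C (∏ i ∈ T, x i) * Polynomial.X ^ T.card := by
      intro T _
      simp [Finset.prod_mul_distrib, map_prod]
    rw [Finset.sum_congr rfl h1, Finset.sum_powerset, Polynomial.finset_sum_coeff]
    have h2 : ∀ j ∈ Finset.range ((Finset.univ : Finset (Fin n)).card + 1),
        (∑ T ∈ Finset.powersetCard j (Finset.univ : Finset (Fin n)),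
          Polynomial.C (∏ i ∈ T, x i) * Polynomial.X ^ T.card).coeff s
        = if j = s then ∑ T ∈ Finset.powersetCard s (Finset.univ : Finset (Fin n)), ∏ i ∈ T, x i
          else 0 := by
      intro j _
      rw [Polynomial.finset_sum_coeff]
      have h3 : ∀ T ∈ Finset.powersetCard j (Finset.univ : Finset (Fin n)),
          (Polynomial.C (∏ i ∈ T, x i) * Polynomial.X ^ T.card).coeff s
          = if j = s then ∏ i ∈ T, x i else 0 := by
        intro T hT
        have hTc : T.card = j := (Finset.mem_powersetCard.mp hT).2
        rw [Polynomial.coeff_C_mul, Polynomial.coeff_X_pow, hTc]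
        by_cases h : j = s
        · simp [h]
        · rw [if_neg (Ne.symm h), if_neg h, mul_zero]
      rw [Finset.sum_congr rfl h3]
      by_cases h : j = s
      · subst h; simp
      · simp [h]
    have hmem : s ∈ Finset.range ((Finset.univ : Finset (Fin n)).card + 1) := by
      simp only [Finset.mem_range, Finset.card_univ, Fintype.card_fin]
      omega
    rw [Finset.sum_congr rfl h2, Finset.sum_ite_eq' _ s, if_pos hmem]
  -- p = (1 - X^2)^m
  have hcoeff2 : p = (1 - Polynomial.X ^ 2 : Polynomial ℝ) ^ m := by
    have hPcard := aux_card_pos n m hnm x hx hsum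
    rw [hp, ← Finset.prod_filter_mul_prod_filter_not Finset.univ (fun i => x i = 1)]
    have e1 : ∀ i ∈ Finset.univ.filter (fun i => x i = 1),
        Polynomial.C (x i) * Polynomial.X + 1 = Polynomial.X + 1 := by
      intro i hi; rw [(Finset.mem_filter.mp hi).2]; simp
    have e2 : ∀ i ∈ Finset.univ.filter (fun i => ¬ x i = 1),
        Polynomial.C (x i) * Polynomial.X + 1 = 1 - Polynomial.X := by
      intro i hi
      have : x i = -1 := by
        rcases hx i with h | h
        · exact h
        · exact absurd h (Finset.mem_filter.mp hi).2
      rw [this]; simp; ring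
    rw [Finset.prod_congr rfl e1, Finset.prod_congr rfl e2, Finset.prod_const, Finset.prod_const,
      hPcard]
    have hcompl : (Finset.univ.filter (fun i => ¬ x i = 1)).card = m := by
      have := Finset.card_filter_add_card_filter_not (s := (Finset.univ : Finset (Fin n)))
        (p := fun i => x i = 1)
      simp only [Finset.card_univ, Fintype.card_fin] at this
      omega
    rw [hcompl, ← mul_pow]
    congr 1
    ring
  -- compute the coefficient of (1 - X^2)^m
  have key : ((1 - Polynomial.X ^ 2 : Polynomial ℝ) ^ m).coeff s
      = (-1) ^ (s / 2) * (m.choose (s / 2) : ℝ) := by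
    have hrw : (1 - Polynomial.X ^ 2 : Polynomial ℝ) = -Polynomial.X ^ 2 + 1 := by ring
    rw [hrw, add_pow]
    have hterm : ∀ k ∈ Finset.range (m + 1),
        ((-Polynomial.X ^ 2 : Polynomial ℝ)) ^ k * 1 ^ (m - k) * (m.choose k : Polynomial ℝ)
        = Polynomial.C ((-1 : ℝ) ^ k * (m.choose k : ℝ)) * Polynomial.X ^ (2 * k) := by
      intro k _
      rw [one_pow, mul_one, neg_pow, ← pow_mul]
      rw [map_mul, map_pow, map_neg, Polynomial.C_1, Polynomial.C_eq_natCast]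
      ring
    rw [Finset.sum_congr rfl hterm, Polynomial.finset_sum_coeff]
    have h4 : ∀ k ∈ Finset.range (m + 1),
        (Polynomial.C ((-1 : ℝ) ^ k * (m.choose k : ℝ)) * Polynomial.X ^ (2 * k)).coeff s
        = if k = s / 2 then (-1 : ℝ) ^ k * (m.choose k : ℝ) else 0 := by
      intro k _
      rw [Polynomial.coeff_C_mul, Polynomial.coeff_X_pow]
      have : (s = 2 * k) ↔ (k = s / 2) := by omega
      by_cases h : k = s / 2
      · rw [if_pos (this.mpr h), if_pos h, mul_one]
      · rw [if_neg (fun hh => h (this.mp hh)), if_neg h, mul_zero]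
    rw [Finset.sum_congr rfl h4, Finset.sum_ite_eq' _ (s / 2)]
    rw [if_pos (by simp only [Finset.mem_range]; omega)]
  rw [← hcoeff1, hcoeff2, key]

lemma aux_perm (n : ℕ) (S T : Finset (Fin n)) (h : S.card = T.card) :
    ∃ e : Equiv.Perm (Fin n), ∀ z, e z ∈ S ↔ z ∈ T := by
  classical
  have hc : Tᶜ.card = Sᶜ.card := by
    rw [Finset.card_compl, Finset.card_compl, h]
  let e1 : {z // z ∈ T} ≃ {z // z ∈ S} := Finset.equivOfCardEq h.symm
  let e2 : {z // z ∈ Tᶜ} ≃ {z // z ∈ Sᶜ} := Finset.equivOfCardEq hc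
  let e2' : {z // ¬ z ∈ T} ≃ {z // ¬ z ∈ S} :=
    (Equiv.subtypeEquivRight (fun z => (Finset.mem_compl (s := T)).symm)).trans
      (e2.trans (Equiv.subtypeEquivRight (fun z => (Finset.mem_compl (s := S)))))
  let e : Equiv.Perm (Fin n) :=
    (Equiv.sumCompl (· ∈ T)).symm.trans ((e1.sumCongr e2').trans (Equiv.sumCompl (· ∈ S)))
  refine ⟨e, fun z => ?_⟩
  by_cases hz : z ∈ T
  · simp only [e, Equiv.trans_apply, Equiv.sumCompl_symm_apply_of_pos hz,
      Equiv.sumCongr_apply, Sum.map_inl, Equiv.sumCompl_apply_inl]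
    exact ⟨fun _ => hz, fun _ => (e1 ⟨z, hz⟩).2⟩
  · simp only [e, Equiv.trans_apply, Equiv.sumCompl_symm_apply_of_neg hz,
      Equiv.sumCongr_apply, Sum.map_inr, Equiv.sumCompl_apply_inr]
    exact ⟨fun hh => absurd hh (e2' ⟨z, hz⟩).2, fun hh => absurd hh hz⟩

lemma aux_mem (n : ℕ) (B : Finset (Fin n → ℝ))
    (hB : B = (Fintype.piFinset fun _ : Fin n => ({-1, 1} : Finset ℝ)).filter
      (fun x => ∑ i, x i = 0)) (x : Fin n → ℝ) :
    x ∈ B ↔ (∀ i, x i = -1 ∨ x i = 1) ∧ ∑ i, x i = 0 := by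
  subst hB
  simp [Fintype.mem_piFinset]

lemma aux_symm (n : ℕ) (B : Finset (Fin n → ℝ))
    (hB : B = (Fintype.piFinset fun _ : Fin n => ({-1, 1} : Finset ℝ)).filter
      (fun x => ∑ i, x i = 0)) (S T : Finset (Fin n)) (h : S.card = T.card) :
    ∑ x ∈ B, ∏ i ∈ S, x i = ∑ x ∈ B, ∏ i ∈ T, x i := by
  classical
  obtain ⟨e, he⟩ := aux_perm n S T h
  have himg : T.image e = S := by
    apply Finset.eq_of_subset_of_card_le
    · intro j hj
      obtain ⟨i, hi, rfl⟩ := Finset.mem_image.mp hj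
      exact (he i).mpr hi
    · rw [Finset.card_image_of_injective _ e.injective, h]
  have hmem : ∀ (f : Equiv.Perm (Fin n)), ∀ x ∈ B, (x ∘ f) ∈ B := by
    intro f x hx
    rw [aux_mem n B hB] at hx ⊢
    refine ⟨fun i => hx.1 (f i), ?_⟩
    have hsc : ∑ i, (x ∘ f) i = ∑ i, x i := Equiv.sum_comp f x
    rw [hsc]
    exact hx.2
  refine Finset.sum_nbij' (fun x => x ∘ e) (fun x => x ∘ e.symm)
    (fun x hx => hmem e x hx) (fun x hx => hmem e.symm x hx) ?_ ?_ ?_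
  · intro x _; funext i; simp
  · intro x _; funext i; simp
  · intro x _
    have : ∏ i ∈ T, (x ∘ e) i = ∏ j ∈ T.image e, x j := by
      rw [Finset.prod_image (fun a _ b _ hab => e.injective hab)]
      rfl
    rw [this, himg]

/-- Moments of the uniform measure on the balanced slice of the hypercube: for `n = 2m`,
the slice `B = {x ∈ {±1}ⁿ : ∑ xᵢ = 0}` has `C(n,m)` points, has odd moments zero, and
satisfies `C(n,|S|) · ∑_{x ∈ B} x^S = (−1)^{|S|/2} C(m,|S|/2) C(n,m)` for `|S|` even. -/
theorem balanced_slice_moments (n m : ℕ) (hm : 1 ≤ m) (hnm : n = 2 * m)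
    (S : Finset (Fin n))
    (B : Finset (Fin n → ℝ))
    (hB : B = (Fintype.piFinset fun _ : Fin n => ({-1, 1} : Finset ℝ)).filter
      (fun x => ∑ i, x i = 0)) :
    B.card = n.choose m ∧
    (Odd S.card → ∑ x ∈ B, ∏ i ∈ S, x i = 0) ∧
    (Even S.card →
      (n.choose S.card : ℝ) * ∑ x ∈ B, ∏ i ∈ S, x i =
        (-1) ^ (S.card / 2) * (m.choose (S.card / 2) : ℝ) * (n.choose m : ℝ)) := by
  classical
  have hmem := aux_mem n B hB
  -- Part 1: cardinality
  have hcard : B.card = n.choose m := by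
    have hb : B.card = (Finset.powersetCard m (Finset.univ : Finset (Fin n))).card := by
      refine Finset.card_bij' (fun x _ => Finset.univ.filter (fun i => x i = 1))
        (fun T _ => fun i => if i ∈ T then (1 : ℝ) else -1) ?_ ?_ ?_ ?_
      · intro x hx
        rw [hmem x] at hx
        exact Finset.mem_powersetCard.mpr ⟨Finset.subset_univ _, aux_card_pos n m hnm x hx.1 hx.2⟩
      · intro T hT
        have hTc : T.card = m := (Finset.mem_powersetCard.mp hT).2
        rw [hmem]
        refine ⟨fun i => by by_cases h : i ∈ T <;> simp [h], ?_⟩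
        have hsplit := Finset.sum_add_sum_compl T (fun i => if i ∈ T then (1 : ℝ) else -1)
        have h1 : ∑ i ∈ T, (if i ∈ T then (1 : ℝ) else -1) = (T.card : ℝ) := by
          rw [Finset.sum_congr rfl (fun i hi => if_pos hi)]; simp
        have h2 : ∑ i ∈ Tᶜ, (if i ∈ T then (1 : ℝ) else -1) = -(Tᶜ.card : ℝ) := by
          rw [Finset.sum_congr rfl (fun i hi => if_neg (Finset.mem_compl.mp hi))]; simp
        have h3 : Tᶜ.card = m := by
          rw [Finset.card_compl, Fintype.card_fin, hTc]; omega
        rw [h1, h2, hTc, h3] at hsplit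
        rw [← hsplit]; ring
      · intro x hx
        rw [hmem x] at hx
        funext k
        rcases hx.1 k with h | h <;> simp [h] <;> norm_num
      · intro T _
        ext k
        simp only [Finset.mem_filter, Finset.mem_univ, true_and]
        by_cases h : k ∈ T <;> simp [h] <;> norm_num
    rw [hb, Finset.card_powersetCard, Finset.card_univ, Fintype.card_fin]
  refine ⟨hcard, ?_, ?_⟩
  -- Part 2: odd moments vanish
  · intro hodd
    have hneg : ∑ x ∈ B, ∏ i ∈ S, x i = ∑ x ∈ B, ∏ i ∈ S, (-1) * x i := by
      refine Finset.sum_nbij' (fun x => -x) (fun x => -x) ?_ ?_ ?_ ?_ ?_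
      · intro x hx
        rw [hmem] at hx ⊢
        refine ⟨fun i => ?_, by simp [hx.2]⟩
        rcases hx.1 i with h | h <;> simp [h]
      · intro x hx
        rw [hmem] at hx ⊢
        refine ⟨fun i => ?_, by simp [hx.2]⟩
        rcases hx.1 i with h | h <;> simp [h]
      · intro x _; simp
      · intro x _; simp
      · intro x _
        apply Finset.prod_congr rfl
        intro i _
        simp
    have hfac : ∀ x : Fin n → ℝ, ∏ i ∈ S, (-1) * x i = (-1) ^ S.card * ∏ i ∈ S, x i := by
      intro x
      rw [Finset.prod_mul_distrib, Finset.prod_const]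
    rw [Finset.sum_congr rfl (fun x _ => hfac x), ← Finset.mul_sum, Odd.neg_one_pow hodd] at hneg
    linarith
  -- Part 3: even moments
  · intro heven
    set s := S.card with hsdef
    have hsn : s ≤ n := by simpa using Finset.card_le_univ S
    have hsym : ∀ T ∈ Finset.powersetCard s (Finset.univ : Finset (Fin n)),
        ∑ x ∈ B, ∏ i ∈ S, x i = ∑ x ∈ B, ∏ i ∈ T, x i := by
      intro T hT
      exact aux_symm n B hB S T (((Finset.mem_powersetCard.mp hT).2).symm)
    have step1 : (n.choose s : ℝ) * ∑ x ∈ B, ∏ i ∈ S, x i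
        = ∑ T ∈ Finset.powersetCard s (Finset.univ : Finset (Fin n)), ∑ x ∈ B, ∏ i ∈ T, x i := by
      rw [← Finset.sum_congr rfl hsym, Finset.sum_const, nsmul_eq_mul,
        Finset.card_powersetCard, Finset.card_univ, Fintype.card_fin]
    rw [step1, Finset.sum_comm]
    have step2 : ∀ x ∈ B, ∑ T ∈ Finset.powersetCard s (Finset.univ : Finset (Fin n)),
        ∏ i ∈ T, x i = (-1) ^ (s / 2) * (m.choose (s / 2) : ℝ) := by
      intro x hx
      rw [hmem] at hx
      exact aux_esymm n m s hnm hsn heven x hx.1 hx.2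
    rw [Finset.sum_congr rfl step2, Finset.sum_const, nsmul_eq_mul, hcard]
    ring
end

section
/- Let n ≥ 2 and define a_k ∈ ℝ for k ∈ ℕ by a_k = 0 if k is odd and a_k = (−1)^{k/2} ∏_{i=0}^{k/2−1} (2i+1)/(n−2i−1) if k is even. Then for all integers a, k ≥ 0 with k + a ≤ ⌊n/2⌋, the a-th forward finite difference satisfies ∑_{j=0}^{a} (−1)^j C(a,j) a_{2(k+j)} = a_{2k} · ∏_{i=0}^{a−1} (n−2i)/(n−2k−2i−1). In particular, taking k = 0 and a = d ≤ ⌊n/2⌋, ∑_{j=0}^{d} (−1)^j C(d,j) a_{2j} = ∏_{i=0}^{d−1} (n−2i)/(n−2i−1). -/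
open Finset

private lemma fd_succ (h : ℕ → ℝ) (b k : ℕ) :
    ∑ j ∈ range (b + 2), (-1 : ℝ) ^ j * ((b+1).choose j : ℝ) * h (k + j) =
      ∑ j ∈ range (b + 1), (-1 : ℝ) ^ j * (b.choose j : ℝ) * h (k + j) -
      ∑ j ∈ range (b + 1), (-1 : ℝ) ^ j * (b.choose j : ℝ) * h (k + 1 + j) := by
  have hB : ∑ j ∈ range (b+1), (-1:ℝ)^j * (b.choose (j+1) : ℝ) * h (k + (j+1))
      = ∑ j ∈ range b, (-1:ℝ)^j * (b.choose (j+1) : ℝ) * h (k + (j+1)) := by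
    rw [Finset.sum_range_succ, Nat.choose_succ_self]
    simp
  have hS1 : ∑ j ∈ range (b + 1), (-1 : ℝ) ^ j * (b.choose j : ℝ) * h (k + j)
      = -∑ j ∈ range b, (-1:ℝ)^j * (b.choose (j+1) : ℝ) * h (k + (j+1)) + h k := by
    rw [Finset.sum_range_succ' (fun j => (-1:ℝ)^j * (b.choose j : ℝ) * h (k + j)) b]
    rw [← Finset.sum_neg_distrib]
    congr 1
    · exact Finset.sum_congr rfl fun x _ => by ring
    · simp
  rw [Finset.sum_range_succ' (fun j => (-1:ℝ)^j * ((b+1).choose j : ℝ) * h (k + j)) (b+1)]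
  have e1 : ∀ j ∈ range (b+1), (-1:ℝ)^(j+1) * (((b+1).choose (j+1) : ℕ) : ℝ) * h (k + (j+1))
      = -((-1:ℝ)^j * (b.choose j : ℝ) * h (k+1+j)) - (-1:ℝ)^j * (b.choose (j+1) : ℝ) * h (k + (j+1)) := by
    intro j _
    rw [Nat.choose_succ_succ]
    have e : k + (j+1) = k + 1 + j := by omega
    push_cast
    rw [e]
    ring
  rw [Finset.sum_congr rfl e1, Finset.sum_sub_distrib, Finset.sum_neg_distrib, hB, hS1]
  simp
  ring

private lemma den_ne (n m : ℕ) (h : 2*m + 2 ≤ n) : ((n:ℝ) - 2*m - 1) ≠ 0 := by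
  have : ((2*m+2 : ℕ) : ℝ) ≤ n := Nat.cast_le.mpr h
  push_cast at this
  intro h0; linarith

private lemma ratio (n : ℕ) : ∀ b k : ℕ, 2*k + 2*b + 2 ≤ n →
    ∏ i ∈ range b, ((n:ℝ) - 2*i) / ((n:ℝ) - 2*(k+1) - 2*i - 1) =
    (∏ i ∈ range b, ((n:ℝ) - 2*i) / ((n:ℝ) - 2*k - 2*i - 1)) *
      (((n:ℝ) - 2*k - 1) / ((n:ℝ) - 2*k - 2*b - 1)) := by
  intro b
  induction b with
  | zero =>
    intro k hk
    have h1 : ((n:ℝ) - 2*k - 1) ≠ 0 := den_ne n k (by omega)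
    simp only [range_zero, prod_empty, one_mul]
    have e : (n:ℝ) - 2*k - 2*((0:ℕ):ℝ) - 1 = (n:ℝ) - 2*k - 1 := by push_cast; ring
    rw [e, div_self h1]
  | succ b ih =>
    intro k hk
    rw [prod_range_succ, prod_range_succ, ih k (by omega)]
    have h1 : ((n:ℝ) - 2*k - 2*b - 1) ≠ 0 := by
      have := den_ne n (k+b) (by omega); push_cast at this ⊢; intro h0; apply this; linarith
    have h2 : ((n:ℝ) - 2*(k+1) - 2*b - 1) ≠ 0 := by
      have := den_ne n (k+1+b) (by omega); push_cast at this ⊢; intro h0; apply this; linarith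
    have h3 : ((n:ℝ) - 2*k - 2*(b+1) - 1) ≠ 0 := by
      have := den_ne n (k+b+1) (by omega); push_cast at this ⊢; intro h0; apply this; linarith
    have h4 : ((n:ℝ) - 2*k - 1) ≠ 0 := den_ne n k (by omega)
    push_cast
    field_simp
    ring

private lemma main_ind (n : ℕ) (g : ℕ → ℝ)
    (hg : ∀ m, g m = (-1:ℝ)^m * ∏ i ∈ range m, (2*i+1:ℝ)/((n:ℝ)-2*i-1)) :
    ∀ b k : ℕ, k + b ≤ n / 2 →
      ∑ j ∈ range (b+1), (-1:ℝ)^j * (b.choose j : ℝ) * g (k+j) =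
        g k * ∏ i ∈ range b, ((n:ℝ)-2*i)/((n:ℝ)-2*k-2*i-1) := by
  intro b
  induction b with
  | zero => intro k hk; simp
  | succ b ih =>
    intro k hk
    have hn2 : 2*k + 2*b + 2 ≤ n := by omega
    rw [fd_succ g b k, ih k (by omega), ih (k+1) (by omega)]
    push_cast
    rw [ratio n b k hn2]
    have hg1 : g (k+1) = -g k * ((2*(k:ℝ)+1)/((n:ℝ)-2*k-1)) := by
      rw [hg (k+1), hg k, prod_range_succ, pow_succ]
      push_cast
      ring
    rw [hg1, prod_range_succ]
    have h1 : ((n:ℝ) - 2*k - 2*b - 1) ≠ 0 := by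
      have := den_ne n (k+b) (by omega); push_cast at this ⊢; intro h0; apply this; linarith
    have h4 : ((n:ℝ) - 2*k - 1) ≠ 0 := den_ne n k (by omega)
    have hP : (∏ x ∈ range b, ((n:ℝ) - 2*(k:ℝ) - 2*(x:ℝ) - 1)) ≠ 0 := by
      apply Finset.prod_ne_zero_iff.mpr
      intro x hx
      have hxb := Finset.mem_range.mp hx
      have := den_ne n (k+x) (by omega)
      push_cast at this ⊢
      intro h0; apply this; linarith
    field_simp [hP]
    ring

/-- Finite differences of the Grigoriev–Laurent pseudomoment sequence:
`∑_{j=0}^{a} (−1)^j C(a,j) a_{2(k+j)} = a_{2k} ∏_{i=0}^{a−1} (n−2i)/(n−2k−2i−1)`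
whenever `k + a ≤ ⌊n/2⌋`; in particular for `k = 0` and `a = d ≤ ⌊n/2⌋` the sum equals
`∏_{i=0}^{d−1} (n−2i)/(n−2i−1)`. -/
theorem grigoriev_laurent_finite_difference (n : ℕ) (hn : 2 ≤ n)
    (a : ℕ → ℝ)
    (ha : ∀ k, a k = if Odd k then 0 else
      (-1) ^ (k / 2) * ∏ i ∈ Finset.range (k / 2), (2 * i + 1 : ℝ) / ((n : ℝ) - 2 * i - 1)) :
    (∀ b k : ℕ, k + b ≤ n / 2 →
      ∑ j ∈ Finset.range (b + 1), (-1 : ℝ) ^ j * (b.choose j : ℝ) * a (2 * (k + j)) =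
        a (2 * k) * ∏ i ∈ Finset.range b,
          ((n : ℝ) - 2 * i) / ((n : ℝ) - 2 * k - 2 * i - 1)) ∧
    (∀ d : ℕ, d ≤ n / 2 →
      ∑ j ∈ Finset.range (d + 1), (-1 : ℝ) ^ j * (d.choose j : ℝ) * a (2 * j) =
        ∏ i ∈ Finset.range d, ((n : ℝ) - 2 * i) / ((n : ℝ) - 2 * i - 1)) := by
  have hA : ∀ m : ℕ, a (2*m) = (-1:ℝ)^m * ∏ i ∈ range m, (2*i+1:ℝ)/((n:ℝ)-2*i-1) := by
    intro m
    rw [ha]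
    have : ¬ Odd (2*m) := by simp [Nat.odd_iff]
    rw [if_neg this, Nat.mul_div_cancel_left m (by norm_num)]
  have part1 : ∀ b k : ℕ, k + b ≤ n / 2 →
      ∑ j ∈ Finset.range (b + 1), (-1 : ℝ) ^ j * (b.choose j : ℝ) * a (2 * (k + j)) =
        a (2 * k) * ∏ i ∈ Finset.range b,
          ((n : ℝ) - 2 * i) / ((n : ℝ) - 2 * k - 2 * i - 1) := by
    intro b k hbk
    simp only [hA]
    exact main_ind n _ (fun m => rfl) b k hbk
  refine ⟨part1, ?_⟩
  intro d hd
  have h0 := part1 d 0 (by omega)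
  simp only [Nat.zero_add, Nat.mul_zero] at h0
  rw [h0, hA 0]
  simp only [pow_zero, range_zero, prod_empty, mul_one, one_mul]
  apply Finset.prod_congr rfl
  intro i _
  norm_num
end

section
/- Let n ≥ 2 and 0 ≤ d with 2d ≤ n. For a permutation π of {1,…,n} let c_j(π) be the number of j-element subsets A with π(A) = A (with c_{−1} = 0), and set χ_d = c_d − c_{d−1}. Let A, B ⊆ {1,…,n} with |A| = a ≤ d, |B| = b ≤ d, and min(a,b) < d, and let 0 ≤ k ≤ min(a,b). Then ∑_{π : |π(A) ∩ B| = k} χ_d(π) = 0, where the sum is over all permutations π of {1,…,n} with |π(A) ∩ B| = k. -/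
open Finset Equiv

section Aux


-- image of a finset under a perm that fixes everything outside U is U itself... 
lemma perm_image_of_fix_outside {n : ℕ} (σ : Equiv.Perm (Fin n)) (U : Finset (Fin n))
    (h : ∀ x ∉ U, σ x = x) : U.image ⇑σ = U := by
  apply Finset.eq_of_subset_of_card_le
  · intro y hy
    simp only [Finset.mem_image] at hy
    obtain ⟨x, hx, rfl⟩ := hy
    by_contra hc
    have h2 := h _ hc
    -- σ x ∉ U, σ (σ x) = σ x so x = σ x
    have : x = σ x := σ.injective (by rw [h2])
    rw [← this] at hc; exact hc hx
  · rw [Finset.card_image_of_injective _ σ.injective]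

lemma gadget2 {n : ℕ} : ∀ (m : ℕ) (S T : Finset (Fin n)), (S \ T).card = m → S.card = T.card →
    ∃ σ : Equiv.Perm (Fin n), S.image ⇑σ = T ∧ ∀ x ∉ S ∪ T, σ x = x := by
  intro m
  induction m with
  | zero =>
    intro S T hm hc
    have hsub : S ⊆ T := by
      rw [← Finset.sdiff_eq_empty_iff_subset]
      exact Finset.card_eq_zero.mp hm
    have : S = T := Finset.eq_of_subset_of_card_le hsub (le_of_eq hc.symm)
    subst this
    exact ⟨1, by simp, fun x _ => rfl⟩
  | succ m ih =>
    intro S T hm hc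
    have hne : (S \ T).Nonempty := by
      rw [← Finset.card_pos, hm]; omega
    obtain ⟨u, hu⟩ := hne
    have hus : u ∈ S := (Finset.mem_sdiff.mp hu).1
    have hut : u ∉ T := (Finset.mem_sdiff.mp hu).2
    have hne2 : (T \ S).Nonempty := by
      rw [← Finset.card_pos]
      have h1 : (S \ T).card + (S ∩ T).card = S.card := by
        rw [Finset.card_sdiff_add_card_inter]
      have h2 : (T \ S).card + (T ∩ S).card = T.card := by
        rw [Finset.card_sdiff_add_card_inter]
      rw [Finset.inter_comm] at h2
      omega
    obtain ⟨v, hv⟩ := hne2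
    have hvt : v ∈ T := (Finset.mem_sdiff.mp hv).1
    have hvs : v ∉ S := (Finset.mem_sdiff.mp hv).2
    have hkey : S.erase u \ T.erase v = (S \ T).erase u := by
      ext x
      simp only [Finset.mem_sdiff, Finset.mem_erase]
      constructor
      · rintro ⟨⟨hxu, hxS⟩, hx2⟩
        refine ⟨hxu, hxS, fun hxT => hx2 ⟨fun hxv => ?_, hxT⟩⟩
        subst hxv; exact hvs hxS
      · rintro ⟨hxu, hxS, hxT⟩
        exact ⟨⟨hxu, hxS⟩, fun ⟨_, h2⟩ => hxT h2⟩
    obtain ⟨σ', hσ'1, hσ'2⟩ := ih (S.erase u) (T.erase v)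
      (by rw [hkey, Finset.card_erase_of_mem hu, hm]; omega)
      (by rw [Finset.card_erase_of_mem hus, Finset.card_erase_of_mem hvt, hc])
    refine ⟨Equiv.swap u v * σ', ?_, ?_⟩
    · have hS : S = insert u (S.erase u) := (Finset.insert_erase hus).symm
      rw [hS]
      rw [Finset.image_insert]
      have h1 : (Equiv.swap u v * σ') u = v := by
        have : σ' u = u := hσ'2 u (by
          simp only [Finset.mem_union, Finset.mem_erase]
          rintro (⟨h1, _⟩ | ⟨_, h2⟩); exact h1 rfl; exact hut h2)
        simp [Equiv.Perm.mul_apply, this, Equiv.swap_apply_left]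
      rw [h1]
      have h2 : (S.erase u).image ⇑(Equiv.swap u v * σ') = T.erase v := by
        have : (S.erase u).image ⇑(Equiv.swap u v * σ') =
            ((S.erase u).image ⇑σ').image ⇑(Equiv.swap u v) := by
          rw [Finset.image_image]; rfl
        rw [this, hσ'1]
        apply Finset.image_congr (g := id) ?_ |>.trans (Finset.image_id)
        intro x hx
        simp only [Finset.mem_coe, Finset.mem_erase] at hx
        apply Equiv.swap_apply_of_ne_of_ne
        · rintro rfl; exact hut hx.2
        · exact hx.1
      rw [h2, Finset.insert_erase hvt]
    · intro x hx
      simp only [Finset.mem_union, not_or] at hx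
      have hx1 : σ' x = x := hσ'2 x (by
        simp only [Finset.mem_union, Finset.mem_erase, not_or]
        exact ⟨fun h => hx.1 h.2, fun h => hx.2 h.2⟩)
      simp only [Equiv.Perm.mul_apply, hx1]
      apply Equiv.swap_apply_of_ne_of_ne
      · rintro rfl; exact hx.1 hus
      · rintro rfl; exact hx.2 hvt

lemma image_eq_of_fix_mem {n : ℕ} (σ : Equiv.Perm (Fin n)) (W : Finset (Fin n))
    (h : ∀ x ∈ W, σ x = x) : W.image ⇑σ = W := by
  have : W.image ⇑σ = W.image id := Finset.image_congr (fun x hx => h x hx)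
  rw [this, Finset.image_id]

/-- Given `|S₁| = |S₂|` and `|S₁ ∩ A| = |S₂ ∩ A|`, there is a permutation stabilizing `A`
(setwise) and mapping `S₁` onto `S₂`. -/
lemma exists_perm_double {n : ℕ} (A S₁ S₂ : Finset (Fin n))
    (hc : S₁.card = S₂.card) (hi : (S₁ ∩ A).card = (S₂ ∩ A).card) :
    ∃ σ : Equiv.Perm (Fin n), A.image ⇑σ = A ∧ S₁.image ⇑σ = S₂ := by
  obtain ⟨σin, hin1, hin2⟩ := gadget2 _ (S₁ ∩ A) (S₂ ∩ A) rfl hi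
  have hdiff : (S₁ \ A).card = (S₂ \ A).card := by
    have h1 : (S₁ \ A).card + (S₁ ∩ A).card = S₁.card := Finset.card_sdiff_add_card_inter _ _
    have h2 : (S₂ \ A).card + (S₂ ∩ A).card = S₂.card := Finset.card_sdiff_add_card_inter _ _
    omega
  obtain ⟨σout, hout1, hout2⟩ := gadget2 _ (S₁ \ A) (S₂ \ A) rfl hdiff
  have hUin : (S₁ ∩ A) ∪ (S₂ ∩ A) ⊆ A :=
    Finset.union_subset (Finset.inter_subset_right) (Finset.inter_subset_right)
  have hUoutA : ∀ x ∈ A, σout x = x := by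
    intro x hx
    apply hout2
    simp only [Finset.mem_union, Finset.mem_sdiff, not_or]
    exact ⟨fun h => h.2 hx, fun h => h.2 hx⟩
  -- σin fixes A setwise
  have hinA : A.image ⇑σin = A := by
    have hinU : ((S₁ ∩ A) ∪ (S₂ ∩ A)).image ⇑σin = (S₁ ∩ A) ∪ (S₂ ∩ A) :=
      perm_image_of_fix_outside σin _ hin2
    have hsplit : A = ((S₁ ∩ A) ∪ (S₂ ∩ A)) ∪ (A \ ((S₁ ∩ A) ∪ (S₂ ∩ A))) :=
      (Finset.union_sdiff_of_subset hUin).symm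
    calc A.image ⇑σin
        = (((S₁ ∩ A) ∪ (S₂ ∩ A)) ∪ (A \ ((S₁ ∩ A) ∪ (S₂ ∩ A)))).image ⇑σin := by rw [← hsplit]
      _ = ((S₁ ∩ A) ∪ (S₂ ∩ A)).image ⇑σin ∪ (A \ ((S₁ ∩ A) ∪ (S₂ ∩ A))).image ⇑σin :=
          Finset.image_union _ _
      _ = ((S₁ ∩ A) ∪ (S₂ ∩ A)) ∪ (A \ ((S₁ ∩ A) ∪ (S₂ ∩ A))) := by
          rw [hinU, image_eq_of_fix_mem _ _ (fun x hx => hin2 x (Finset.mem_sdiff.mp hx).2)]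
      _ = A := hsplit.symm
  refine ⟨σout * σin, ?_, ?_⟩
  · have : A.image ⇑(σout * σin) = (A.image ⇑σin).image ⇑σout := by
      rw [Finset.image_image]; rfl
    rw [this, hinA, image_eq_of_fix_mem _ _ hUoutA]
  · have hS1 : S₁ = (S₁ ∩ A) ∪ (S₁ \ A) := by
      ext x; simp only [Finset.mem_union, Finset.mem_inter, Finset.mem_sdiff]; tauto
    have hS2 : (S₂ ∩ A) ∪ (S₂ \ A) = S₂ := by
      ext x; simp only [Finset.mem_union, Finset.mem_inter, Finset.mem_sdiff]; tauto
    have himg : S₁.image ⇑(σout * σin) = (S₁.image ⇑σin).image ⇑σout := by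
      rw [Finset.image_image]; rfl
    rw [himg]
    have h1 : S₁.image ⇑σin = (S₂ ∩ A) ∪ (S₁ \ A) := by
      conv_lhs => rw [hS1]
      rw [Finset.image_union, hin1]
      congr 1
      apply image_eq_of_fix_mem
      intro x hx
      apply hin2
      simp only [Finset.mem_union, Finset.mem_inter, not_or]
      have := (Finset.mem_sdiff.mp hx).2
      exact ⟨fun h => this h.2, fun h => this h.2⟩
    rw [h1, Finset.image_union, hout1, image_eq_of_fix_mem _ _
      (fun x hx => hUoutA x (Finset.mem_inter.mp hx).2), hS2]

noncomputable def xi (d t τ : ℕ) : ℝ :=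
  if t ≤ τ then
    (-1)^(τ - t) * ((Nat.factorial τ : ℝ) / (Nat.factorial t : ℝ)) /
      (∏ i ∈ Finset.Icc t τ, ((d:ℝ) - (i:ℝ)))
  else 0

lemma prod_Icc_ne_zero (d t τ : ℕ) (h : τ < d) :
    (∏ i ∈ Finset.Icc t τ, ((d:ℝ) - (i:ℝ))) ≠ 0 := by
  apply Finset.prod_ne_zero_iff.mpr
  intro i hi
  have : i < d := lt_of_le_of_lt (Finset.mem_Icc.mp hi).2 h
  have : (i:ℝ) < (d:ℝ) := by exact_mod_cast this
  linarith

lemma xi_self (d t : ℕ) (h : t < d) : ((d:ℝ) - t) * xi d t t = 1 := by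
  unfold xi
  rw [if_pos le_rfl]
  rw [Finset.Icc_self, Finset.prod_singleton]
  have h1 : (d:ℝ) - t ≠ 0 := by
    have : (t:ℝ) < d := by exact_mod_cast h
    linarith
  have h2 : (Nat.factorial t : ℝ) ≠ 0 := by exact_mod_cast (Nat.factorial_ne_zero t)
  simp only [Nat.sub_self, pow_zero, one_mul]
  field_simp

lemma xi_zero_of_gt (d t τ : ℕ) (h : τ < t) : xi d t τ = 0 := by
  unfold xi; rw [if_neg (by omega)]

lemma xi1 (d t τ : ℕ) (hτd : τ < d) :
    ((d:ℝ) - τ) * xi d t τ + (τ:ℝ) * xi d t (τ - 1) = if t = τ then 1 else 0 := by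
  by_cases h1 : t ≤ τ
  · by_cases h2 : t = τ
    · subst h2
      rw [if_pos rfl, xi_self d t hτd]
      rcases Nat.eq_zero_or_pos t with h | h
      · subst h; simp
      · rw [xi_zero_of_gt d t (t-1) (by omega)]; ring
    · have h3 : t ≤ τ - 1 := by omega
      have hτ1 : 1 ≤ τ := by omega
      rw [if_neg h2]
      unfold xi
      rw [if_pos h1, if_pos h3]
      have hsplit : Finset.Icc t τ = insert τ (Finset.Icc t (τ-1)) := by
        ext i; simp only [Finset.mem_Icc, Finset.mem_insert]; omega
      have hnotmem : τ ∉ Finset.Icc t (τ-1) := by simp only [Finset.mem_Icc]; omega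
      rw [hsplit, Finset.prod_insert hnotmem]
      have hP : (∏ i ∈ Finset.Icc t (τ-1), ((d:ℝ) - (i:ℝ))) ≠ 0 :=
        prod_Icc_ne_zero d t (τ-1) (by omega)
      have hdτ : (d:ℝ) - τ ≠ 0 := by
        have : (τ:ℝ) < d := by exact_mod_cast hτd
        linarith
      have hsign : (-1:ℝ)^(τ - t) = (-1)^(τ - 1 - t) * (-1) := by
        have : τ - t = (τ - 1 - t) + 1 := by omega
        rw [this, pow_succ]
      have hfact : (Nat.factorial τ : ℝ) = (τ:ℝ) * (Nat.factorial (τ-1) : ℝ) := by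
        exact_mod_cast (Nat.mul_factorial_pred (by omega : τ ≠ 0)).symm
      have hft : (Nat.factorial t : ℝ) ≠ 0 := by exact_mod_cast (Nat.factorial_ne_zero t)
      rw [hsign, hfact]
      field_simp
      ring
  · push_neg at h1
    rw [xi_zero_of_gt d t τ h1, xi_zero_of_gt d t (τ-1) (by omega), if_neg (by omega)]
    ring

lemma xi2 (d t τ : ℕ) (htd : t < d) (hτd : τ < d) :
    ((d:ℝ) - t) * xi d t τ + ((t:ℝ) + 1) * xi d (t+1) τ = if t = τ then 1 else 0 := by
  by_cases h1 : t ≤ τ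
  · by_cases h2 : t = τ
    · subst h2
      rw [if_pos rfl, xi_self d t htd, xi_zero_of_gt d (t+1) t (by omega)]; ring
    · have h3 : t + 1 ≤ τ := by omega
      rw [if_neg h2]
      unfold xi
      rw [if_pos h1, if_pos h3]
      have hsplit : Finset.Icc t τ = insert t (Finset.Icc (t+1) τ) := by
        ext i; simp only [Finset.mem_Icc, Finset.mem_insert]; omega
      have hnotmem : t ∉ Finset.Icc (t+1) τ := by simp only [Finset.mem_Icc]; omega
      rw [hsplit, Finset.prod_insert hnotmem]
      have hP : (∏ i ∈ Finset.Icc (t+1) τ, ((d:ℝ) - (i:ℝ))) ≠ 0 :=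
        prod_Icc_ne_zero d (t+1) τ hτd
      have hdt : (d:ℝ) - t ≠ 0 := by
        have : (t:ℝ) < d := by exact_mod_cast htd
        linarith
      have hsign : (-1:ℝ)^(τ - t) = (-1)^(τ - (t+1)) * (-1) := by
        have : τ - t = (τ - (t+1)) + 1 := by omega
        rw [this, pow_succ]
      have hfact : (Nat.factorial (t+1) : ℝ) = ((t:ℝ) + 1) * (Nat.factorial t : ℝ) := by
        simp only [Nat.factorial_succ]; push_cast; ring
      have hft : (Nat.factorial t : ℝ) ≠ 0 := by exact_mod_cast (Nat.factorial_ne_zero t)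
      have hft1 : (Nat.factorial (t+1) : ℝ) ≠ 0 := by
        exact_mod_cast (Nat.factorial_ne_zero (t+1))
      rw [hsign, hfact]
      field_simp
      ring
  · push_neg at h1
    rw [xi_zero_of_gt d t τ h1, xi_zero_of_gt d (t+1) τ (by omega), if_neg (by omega)]
    ring

lemma erase_of_sdiff_card_one {n : ℕ} (S T : Finset (Fin n)) (hsub : T ⊆ S)
    (hone : (S \ T).card = 1) (z : Fin n) (hz : z ∈ S \ T) : S.erase z = T := by
  obtain ⟨a, ha⟩ := Finset.card_eq_one.mp hone
  rw [ha] at hz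
  have hza : z = a := Finset.mem_singleton.mp hz
  subst hza
  have hzS : z ∈ S := by
    have : z ∈ S \ T := by rw [ha]; exact Finset.mem_singleton_self z
    exact (Finset.mem_sdiff.mp this).1
  have hzT : z ∉ T := by
    have : z ∈ S \ T := by rw [ha]; exact Finset.mem_singleton_self z
    exact (Finset.mem_sdiff.mp this).2
  ext x
  simp only [Finset.mem_erase]
  constructor
  · rintro ⟨hxz, hxS⟩
    by_contra hxT
    have : x ∈ S \ T := Finset.mem_sdiff.mpr ⟨hxS, hxT⟩
    rw [ha] at this
    exact hxz (Finset.mem_singleton.mp this)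
  · intro hxT
    exact ⟨fun h => hzT (h ▸ hxT), hsub hxT⟩

lemma sdiff_erase_singleton {n : ℕ} (S : Finset (Fin n)) (x : Fin n) (hx : x ∈ S) :
    S \ S.erase x = {x} := by
  ext y
  simp only [Finset.mem_sdiff, Finset.mem_erase, Finset.mem_singleton, not_and]
  constructor
  · rintro ⟨hyS, h⟩
    by_contra hyx
    exact (h hyx) hyS
  · rintro rfl
    exact ⟨hx, fun h _ => absurd rfl h⟩

/-- Summing a weight depending on `|T ∩ A|` over the `(j-1)`-subsets `T` of a `j`-set `S`. -/
lemma sum_sub_weight {n : ℕ} (A S : Finset (Fin n)) (j : ℕ) (hS : S.card = j) (hj : 1 ≤ j)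
    (w : ℕ → ℝ) :
    ∑ T ∈ univ.filter (fun T : Finset (Fin n) => T.card = j - 1 ∧ T ⊆ S), w ((T ∩ A).card)
      = ((j:ℝ) - ((S ∩ A).card : ℝ)) * w ((S ∩ A).card)
        + ((S ∩ A).card : ℝ) * w ((S ∩ A).card - 1) := by
  set t := (S ∩ A).card with ht
  have hone : ∀ T ∈ univ.filter (fun T : Finset (Fin n) => T.card = j - 1 ∧ T ⊆ S),
      (S \ T).card = 1 := by
    intro T hT
    obtain ⟨-, hT1, hT2⟩ := Finset.mem_filter.mp hT |>.imp id id
    rw [Finset.card_sdiff_of_subset hT2, hS, hT1]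
    omega
  have step1 : ∑ T ∈ univ.filter (fun T : Finset (Fin n) => T.card = j - 1 ∧ T ⊆ S),
      w ((T ∩ A).card) = ∑ x ∈ S, w ((S.erase x ∩ A).card) := by
    refine Finset.sum_bij' (fun T hT => (S \ T).min' (by
        rw [← Finset.card_pos, hone T hT]; omega))
      (fun x _ => S.erase x) ?_ ?_ ?_ ?_ ?_
    · intro T hT
      have := Finset.min'_mem (S \ T) (by rw [← Finset.card_pos, hone T hT]; omega)
      exact (Finset.mem_sdiff.mp this).1
    · intro x hx
      simp only [Finset.mem_filter, Finset.mem_univ, true_and]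
      exact ⟨by rw [Finset.card_erase_of_mem hx, hS], Finset.erase_subset _ _⟩
    · intro T hT
      have hmem := Finset.mem_filter.mp hT
      exact erase_of_sdiff_card_one S T hmem.2.2 (hone T hT) _ (Finset.min'_mem _ _)
    · intro x hx
      have h1 : S \ S.erase x = {x} := sdiff_erase_singleton S x hx
      have this2 := Finset.min'_mem (S \ S.erase x) (by
        rw [← Finset.card_pos, h1, Finset.card_singleton]; omega)
      have hx2 : ∀ y, y ∈ S \ S.erase x → y = x := by
        intro y hy
        rw [h1] at hy
        exact Finset.mem_singleton.mp hy
      exact hx2 _ this2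
    · intro T hT
      have hmem := Finset.mem_filter.mp hT
      exact congrArg (fun X => w ((X ∩ A).card))
        (erase_of_sdiff_card_one S T hmem.2.2 (hone T hT) _ (Finset.min'_mem _ _)).symm
  rw [step1]
  have herase : ∀ x, S.erase x ∩ A = (S ∩ A).erase x := by
    intro x
    ext y
    simp only [Finset.mem_inter, Finset.mem_erase]
    tauto
  have hsplit : ∑ x ∈ S, w ((S.erase x ∩ A).card)
      = ∑ x ∈ S ∩ A, w ((S.erase x ∩ A).card) + ∑ x ∈ S \ A, w ((S.erase x ∩ A).card) :=
    (Finset.sum_inter_add_sum_sdiff S A _).symm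
  rw [hsplit]
  have h1 : ∀ x ∈ S ∩ A, w ((S.erase x ∩ A).card) = w (t - 1) := by
    intro x hx
    rw [herase, Finset.card_erase_of_mem hx]
  have h2 : ∀ x ∈ S \ A, w ((S.erase x ∩ A).card) = w t := by
    intro x hx
    rw [herase, Finset.erase_eq_of_notMem (fun hc => (Finset.mem_sdiff.mp hx).2
      (Finset.mem_inter.mp hc).2)]
  rw [Finset.sum_congr rfl h1, Finset.sum_congr rfl h2, Finset.sum_const, Finset.sum_const]
  have hcard : (S \ A).card + (S ∩ A).card = S.card := Finset.card_sdiff_add_card_inter S A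
  have htj : t ≤ j := by rw [← hS]; exact Finset.card_le_card (Finset.inter_subset_left)
  have hda : (S \ A).card = j - t := by omega
  rw [hda, ← ht, nsmul_eq_mul, nsmul_eq_mul, Nat.cast_sub htj]
  ring

def gcount {n : ℕ} (F : Finset (Equiv.Perm (Fin n))) (S S' : Finset (Fin n)) : ℕ :=
  (F.filter (fun π : Equiv.Perm (Fin n) => S.image ⇑π = S')).card

lemma image_perm_inv {n : ℕ} (σ : Equiv.Perm (Fin n)) (S T : Finset (Fin n))
    (h : S.image ⇑σ = T) : T.image ⇑σ⁻¹ = S := by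
  rw [← h, Finset.image_image]
  have : (⇑σ⁻¹ ∘ ⇑σ) = id := by funext x; simp
  rw [this, Finset.image_id]

lemma perm_image_mul {n : ℕ} (π σ : Equiv.Perm (Fin n)) (S : Finset (Fin n)) :
    S.image ⇑(π * σ) = (S.image ⇑σ).image ⇑π := by
  rw [Finset.image_image]; rfl

lemma gcount_inv {n : ℕ} (A : Finset (Fin n)) (F : Finset (Equiv.Perm (Fin n)))
    (hF : ∀ σ π : Equiv.Perm (Fin n), A.image ⇑σ = A → ((π * σ) ∈ F ↔ π ∈ F))
    (S₁ S₂ S' : Finset (Fin n)) (hc : S₁.card = S₂.card)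
    (hi : (S₁ ∩ A).card = (S₂ ∩ A).card) :
    gcount F S₁ S' = gcount F S₂ S' := by
  obtain ⟨σ, hσA, hσS⟩ := exists_perm_double A S₂ S₁ hc.symm hi.symm
  have hσA' : A.image ⇑σ⁻¹ = A := image_perm_inv σ A A hσA
  have hσS' : S₁.image ⇑σ⁻¹ = S₂ := image_perm_inv σ S₂ S₁ hσS
  unfold gcount
  apply Finset.card_bij' (i := fun π _ => π * σ) (j := fun π _ => π * σ⁻¹)
  · intro π hπ
    simp only [Finset.mem_filter] at hπ ⊢
    refine ⟨(hF σ π hσA).mpr hπ.1, ?_⟩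
    rw [perm_image_mul, hσS, hπ.2]
  · intro π hπ
    simp only [Finset.mem_filter] at hπ ⊢
    refine ⟨(hF σ⁻¹ π hσA').mpr hπ.1, ?_⟩
    rw [perm_image_mul, hσS', hπ.2]
  · intro π _; group
  · intro π _; group

lemma mem_image_perm {n : ℕ} (π : Equiv.Perm (Fin n)) (S : Finset (Fin n)) (x : Fin n) :
    x ∈ S.image ⇑π ↔ π⁻¹ x ∈ S := by
  simp only [Finset.mem_image]
  constructor
  · rintro ⟨y, hy, rfl⟩; simpa
  · intro h; exact ⟨π⁻¹ x, h, by simp⟩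

lemma subset_image_iff_perm {n : ℕ} (π : Equiv.Perm (Fin n)) (S T : Finset (Fin n)) :
    T.image ⇑π⁻¹ ⊆ S ↔ T ⊆ S.image ⇑π := by
  constructor
  · intro h x hx
    rw [mem_image_perm]
    exact h (Finset.mem_image_of_mem _ hx)
  · intro h x hx
    simp only [Finset.mem_image] at hx
    obtain ⟨y, hy, rfl⟩ := hx
    rw [← mem_image_perm]
    exact h hy

/-- The exchange identity (both sides count pairs `(π, ·)` with `T ⊆ π(Sc)`). -/
lemma dagger {n d : ℕ} (F : Finset (Equiv.Perm (Fin n))) (Sc T : Finset (Fin n))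
    (hS : Sc.card = d) (hT : T.card = d - 1) :
    ∑ S ∈ univ.filter (fun S : Finset (Fin n) => S.card = d ∧ T ⊆ S), (gcount F Sc S : ℝ)
      = ∑ T' ∈ univ.filter (fun T' : Finset (Fin n) => T'.card = d - 1 ∧ T' ⊆ Sc),
          (gcount F T' T : ℝ) := by
  have expand : ∀ (X Y : Finset (Fin n)),
      (gcount F X Y : ℝ) = ∑ π ∈ F, (if X.image ⇑π = Y then (1:ℝ) else 0) := by
    intro X Y
    unfold gcount
    rw [Finset.card_filter]
    push_cast
    rfl
  simp only [expand]
  rw [Finset.sum_comm, Finset.sum_comm (s := univ.filter (fun T' : Finset (Fin n) =>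
    T'.card = d - 1 ∧ T' ⊆ Sc))]
  apply Finset.sum_congr rfl
  intro π _
  have hL : ∑ S ∈ univ.filter (fun S : Finset (Fin n) => S.card = d ∧ T ⊆ S),
      (if Sc.image ⇑π = S then (1:ℝ) else 0) = if T ⊆ Sc.image ⇑π then (1:ℝ) else 0 := by
    rw [Finset.sum_ite_eq]
    congr 1
    simp only [Finset.mem_filter, Finset.mem_univ, true_and, eq_iff_iff]
    have : (Sc.image ⇑π).card = d := by
      rw [Finset.card_image_of_injective _ π.injective, hS]
    tauto
  have hR : ∑ T' ∈ univ.filter (fun T' : Finset (Fin n) => T'.card = d - 1 ∧ T' ⊆ Sc),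
      (if T'.image ⇑π = T then (1:ℝ) else 0) = if T ⊆ Sc.image ⇑π then (1:ℝ) else 0 := by
    have hcond : ∀ T' : Finset (Fin n), (T'.image ⇑π = T) ↔ (T' = T.image ⇑π⁻¹) := by
      intro T'
      constructor
      · intro h; exact (image_perm_inv π T' T h).symm
      · rintro rfl
        have := image_perm_inv π⁻¹ T (T.image ⇑π⁻¹) rfl
        rwa [(inv_inv π : π⁻¹⁻¹ = π)] at this
    simp only [hcond]
    rw [Finset.sum_ite_eq']
    congr 1
    simp only [Finset.mem_filter, Finset.mem_univ, true_and, eq_iff_iff]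
    have h1 : (T.image ⇑π⁻¹).card = d - 1 := by
      rw [Finset.card_image_of_injective _ (π⁻¹).injective, hT]
    have h2 : T.image ⇑π⁻¹ ⊆ Sc ↔ T ⊆ Sc.image ⇑π := subset_image_iff_perm π Sc T
    tauto
  rw [hL, hR]

lemma exists_canon {n : ℕ} (A : Finset (Fin n)) (a : ℕ) (hA : A.card = a) (j t : ℕ)
    (ht : t ≤ a) (htj : t ≤ j) (hjn : j - t ≤ n - a) :
    ∃ S : Finset (Fin n), S.card = j ∧ (S ∩ A).card = t := by
  obtain ⟨A₁, hA₁sub, hA₁card⟩ := Finset.exists_subset_card_eq (s := A) (n := t) (by omega)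
  obtain ⟨A₂, hA₂sub, hA₂card⟩ := Finset.exists_subset_card_eq (s := Aᶜ) (n := j - t) (by
    rw [Finset.card_compl, Fintype.card_fin, hA]; exact hjn)
  have hdisj : Disjoint A₁ A₂ := by
    rw [Finset.disjoint_left]
    intro x hx1 hx2
    exact (Finset.mem_compl.mp (hA₂sub hx2)) (hA₁sub hx1)
  refine ⟨A₁ ∪ A₂, ?_, ?_⟩
  · rw [Finset.card_union_of_disjoint hdisj, hA₁card, hA₂card]; omega
  · have : (A₁ ∪ A₂) ∩ A = A₁ := by
      ext x
      simp only [Finset.mem_inter, Finset.mem_union]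
      constructor
      · rintro ⟨h1 | h2, hxA⟩
        · exact h1
        · exact absurd hxA (Finset.mem_compl.mp (hA₂sub h2))
      · intro h
        exact ⟨Or.inl h, hA₁sub h⟩
    rw [this, hA₁card]

/-- The key lemma: for a right-`stab(A)`-invariant set `F` of permutations with `|A| < d`,
the number of pairs `(π ∈ F, S)` with `π(S) = S`, `|S| = d` equals that with `|S| = d-1`. -/
lemma key {n : ℕ} (d a : ℕ) (hd1 : 1 ≤ d) (A : Finset (Fin n)) (hA : A.card = a)
    (had : a < d) (hdn : d ≤ n - a)
    (F : Finset (Equiv.Perm (Fin n)))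
    (hF : ∀ σ π : Equiv.Perm (Fin n), A.image ⇑σ = A → ((π * σ) ∈ F ↔ π ∈ F)) :
    ∑ S ∈ univ.filter (fun S : Finset (Fin n) => S.card = d), (gcount F S S : ℝ)
      = ∑ T ∈ univ.filter (fun T : Finset (Fin n) => T.card = d - 1), (gcount F T T : ℝ) := by
  classical
  -- canonical representatives
  have hex : ∀ j t : ℕ, ∃ S : Finset (Fin n),
      (t ≤ a → t ≤ j → j ≤ d → (S.card = j ∧ (S ∩ A).card = t)) := by
    intro j t
    by_cases h : t ≤ a ∧ t ≤ j ∧ j ≤ d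
    · obtain ⟨S, hS1, hS2⟩ := exists_canon A a hA j t h.1 h.2.1 (by omega)
      exact ⟨S, fun _ _ _ => ⟨hS1, hS2⟩⟩
    · exact ⟨∅, fun h1 h2 h3 => absurd ⟨h1, h2, h3⟩ h⟩
  choose canon hcanon using hex
  have hcanD : ∀ t ≤ a, (canon d t).card = d ∧ ((canon d t) ∩ A).card = t :=
    fun t ht => hcanon d t ht (by omega) le_rfl
  have hcanT : ∀ t ≤ a, (canon (d-1) t).card = d - 1 ∧ ((canon (d-1) t) ∩ A).card = t :=
    fun t ht => hcanon (d-1) t ht (by omega) (by omega)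
  set 𝒟 : Finset (Finset (Fin n)) := univ.filter (fun S : Finset (Fin n) => S.card = d)
    with h𝒟
  set 𝒯 : Finset (Finset (Fin n)) := univ.filter (fun T : Finset (Fin n) => T.card = d - 1)
    with h𝒯
  have hmemD : ∀ S, S ∈ 𝒟 ↔ S.card = d := by
    intro S; rw [h𝒟, Finset.mem_filter]; simp
  have hmemT : ∀ T, T ∈ 𝒯 ↔ T.card = d - 1 := by
    intro T; rw [h𝒯, Finset.mem_filter]; simp
  have htSa : ∀ S : Finset (Fin n), (S ∩ A).card ≤ a := by
    intro S; rw [← hA]; exact Finset.card_le_card Finset.inter_subset_right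
  -- the δ-collapse helper
  have delta_sum : ∀ (f : ℕ → ℝ) (m : ℕ), m ≤ a →
      ∑ t ∈ Finset.range (a+1), (if t = m then (1:ℝ) else 0) * f t = f m := by
    intro f m hm
    have : ∀ t, (if t = m then (1:ℝ) else 0) * f t = if t = m then f t else 0 := by
      intro t; split <;> simp
    simp only [this]
    rw [Finset.sum_ite_eq' (Finset.range (a+1)) m f]
    rw [if_pos (Finset.mem_range.mpr (by omega))]
  -- Step 1–3 : expand the d-side
  have step13 : ∑ S ∈ 𝒟, (gcount F S S : ℝ)
      = ∑ S ∈ 𝒟, ∑ t ∈ Finset.range (a+1),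
          (∑ T ∈ univ.filter (fun T : Finset (Fin n) => T.card = d - 1 ∧ T ⊆ S),
            xi d t ((T ∩ A).card)) * (gcount F (canon d t) S : ℝ) := by
    apply Finset.sum_congr rfl
    intro S hS
    have hScard : S.card = d := (hmemD S).mp hS
    have htS := htSa S
    -- inner subset-sum is the δ
    have hinner : ∀ t ∈ Finset.range (a+1),
        (∑ T ∈ univ.filter (fun T : Finset (Fin n) => T.card = d - 1 ∧ T ⊆ S),
          xi d t ((T ∩ A).card)) = if t = (S ∩ A).card then (1:ℝ) else 0 := by
      intro t _
      rw [sum_sub_weight A S d hScard hd1 (fun τ => xi d t τ)]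
      exact xi1 d t ((S ∩ A).card) (by omega)
    rw [Finset.sum_congr rfl (fun t ht => by rw [hinner t ht])]
    rw [delta_sum (fun t => (gcount F (canon d t) S : ℝ)) ((S ∩ A).card) htS]
    exact_mod_cast gcount_inv A F hF S (canon d ((S ∩ A).card)) S
      (by rw [hScard, (hcanD _ htS).1]) (by rw [(hcanD _ htS).2])
  rw [step13]
  -- Step 4–5 : push sums around, swap (S,T)
  have step45 : ∑ S ∈ 𝒟, ∑ t ∈ Finset.range (a+1),
      (∑ T ∈ univ.filter (fun T : Finset (Fin n) => T.card = d - 1 ∧ T ⊆ S),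
        xi d t ((T ∩ A).card)) * (gcount F (canon d t) S : ℝ)
      = ∑ t ∈ Finset.range (a+1), ∑ T ∈ 𝒯, xi d t ((T ∩ A).card) *
          ∑ S ∈ univ.filter (fun S : Finset (Fin n) => S.card = d ∧ T ⊆ S),
            (gcount F (canon d t) S : ℝ) := by
    rw [Finset.sum_comm]
    apply Finset.sum_congr rfl
    intro t _
    -- now fixed t : ∑_S (∑_{T ⊆ S} xi) * G = ∑_T xi * ∑_{S ⊇ T} G
    have lhs_eq : ∀ S : Finset (Fin n),
        (∑ T ∈ univ.filter (fun T : Finset (Fin n) => T.card = d - 1 ∧ T ⊆ S),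
          xi d t ((T ∩ A).card)) * (gcount F (canon d t) S : ℝ)
        = ∑ T ∈ 𝒯, (if T ⊆ S then xi d t ((T ∩ A).card) * (gcount F (canon d t) S : ℝ)
            else 0) := by
      intro S
      rw [Finset.sum_mul]
      have : univ.filter (fun T : Finset (Fin n) => T.card = d - 1 ∧ T ⊆ S)
          = 𝒯.filter (fun T => T ⊆ S) := by
        rw [h𝒯, Finset.filter_filter]
      rw [this, Finset.sum_filter]
    simp only [lhs_eq]
    rw [Finset.sum_comm]
    apply Finset.sum_congr rfl
    intro T _
    rw [Finset.mul_sum]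
    have : univ.filter (fun S : Finset (Fin n) => S.card = d ∧ T ⊆ S)
        = 𝒟.filter (fun S => T ⊆ S) := by
      rw [h𝒟, Finset.filter_filter]
    rw [this, Finset.sum_filter, Finset.sum_filter, Finset.sum_filter]
  rw [step45]
  -- Step 6–7 : apply dagger and expand over subsets of canon d t
  have step67 : ∀ t ∈ Finset.range (a+1), ∀ T ∈ 𝒯,
      (∑ S ∈ univ.filter (fun S : Finset (Fin n) => S.card = d ∧ T ⊆ S),
        (gcount F (canon d t) S : ℝ))
      = ((d:ℝ) - t) * (gcount F (canon (d-1) t) T : ℝ)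
        + (t:ℝ) * (gcount F (canon (d-1) (t-1)) T : ℝ) := by
    intro t ht T hT
    have hta : t ≤ a := by
      have := Finset.mem_range.mp ht; omega
    have hTcard : T.card = d - 1 := (hmemT T).mp hT
    rw [dagger F (canon d t) T (hcanD t hta).1 hTcard]
    have hrepl : ∀ T' ∈ univ.filter (fun T' : Finset (Fin n) =>
        T'.card = d - 1 ∧ T' ⊆ canon d t),
        (gcount F T' T : ℝ) = (gcount F (canon (d-1) ((T' ∩ A).card)) T : ℝ) := by
      intro T' hT'
      have hT'card : T'.card = d - 1 := (Finset.mem_filter.mp hT').2.1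
      have hτa : (T' ∩ A).card ≤ a := htSa T'
      exact_mod_cast gcount_inv A F hF T' (canon (d-1) ((T' ∩ A).card)) T
        (by rw [hT'card, (hcanT _ hτa).1]) (by rw [(hcanT _ hτa).2])
    rw [Finset.sum_congr rfl hrepl]
    rw [sum_sub_weight A (canon d t) d (hcanD t hta).1 hd1
      (fun τ => (gcount F (canon (d-1) τ) T : ℝ))]
    rw [(hcanD t hta).2]
  -- assemble: rewrite with step67 then finish with xi2
  have step8 : ∑ t ∈ Finset.range (a+1), ∑ T ∈ 𝒯, xi d t ((T ∩ A).card) *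
      (∑ S ∈ univ.filter (fun S : Finset (Fin n) => S.card = d ∧ T ⊆ S),
        (gcount F (canon d t) S : ℝ))
      = ∑ T ∈ 𝒯, ∑ t ∈ Finset.range (a+1), xi d t ((T ∩ A).card) *
          (((d:ℝ) - t) * (gcount F (canon (d-1) t) T : ℝ)
            + (t:ℝ) * (gcount F (canon (d-1) (t-1)) T : ℝ)) := by
    rw [Finset.sum_comm]
    apply Finset.sum_congr rfl
    intro T hT
    apply Finset.sum_congr rfl
    intro t ht
    rw [step67 t ht T hT]
  rw [step8]
  -- Step 9–10 : reindex and collapse with xi2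
  apply Finset.sum_congr rfl
  intro T hT
  have hτa : (T ∩ A).card ≤ a := htSa T
  set τ := (T ∩ A).card with hτ
  have expand : ∀ t ∈ Finset.range (a+1), xi d t τ *
      (((d:ℝ) - t) * (gcount F (canon (d-1) t) T : ℝ)
        + (t:ℝ) * (gcount F (canon (d-1) (t-1)) T : ℝ))
      = ((d:ℝ) - t) * xi d t τ * (gcount F (canon (d-1) t) T : ℝ)
        + (t:ℝ) * xi d t τ * (gcount F (canon (d-1) (t-1)) T : ℝ) := by
    intro t _; ring
  rw [Finset.sum_congr rfl expand, Finset.sum_add_distrib]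
  -- reindex the second sum
  have reindex : ∑ t ∈ Finset.range (a+1),
      (t:ℝ) * xi d t τ * (gcount F (canon (d-1) (t-1)) T : ℝ)
      = ∑ t ∈ Finset.range (a+1),
          ((t:ℝ) + 1) * xi d (t+1) τ * (gcount F (canon (d-1) t) T : ℝ) := by
    rw [Finset.sum_range_succ' (fun t => (t:ℝ) * xi d t τ *
      (gcount F (canon (d-1) (t-1)) T : ℝ)) a]
    rw [Finset.sum_range_succ (fun t => ((t:ℝ) + 1) * xi d (t+1) τ *
      (gcount F (canon (d-1) t) T : ℝ)) a]
    simp only [Nat.cast_zero, zero_mul, add_zero, Nat.cast_succ]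
    rw [xi_zero_of_gt d (a+1) τ (by omega)]
    simp only [mul_zero, zero_mul, add_zero]
    apply Finset.sum_congr rfl
    intro t _
    push_cast
    congr 1
  rw [reindex, ← Finset.sum_add_distrib]
  have collapse : ∀ t ∈ Finset.range (a+1),
      ((d:ℝ) - t) * xi d t τ * (gcount F (canon (d-1) t) T : ℝ)
        + ((t:ℝ) + 1) * xi d (t+1) τ * (gcount F (canon (d-1) t) T : ℝ)
      = (if t = τ then (1:ℝ) else 0) * (gcount F (canon (d-1) t) T : ℝ) := by
    intro t ht
    have hta : t ≤ a := by have := Finset.mem_range.mp ht; omega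
    rw [← add_mul, xi2 d t τ (by omega) (by omega)]
  rw [Finset.sum_congr rfl collapse]
  rw [delta_sum (fun t => (gcount F (canon (d-1) t) T : ℝ)) τ hτa]
  exact_mod_cast gcount_inv A F hF (canon (d-1) τ) T T
    (by rw [(hcanT _ hτa).1, (hmemT T).mp hT]) (by rw [(hcanT _ hτa).2])

/-- Sum of `c_j` over `F` counts pairs. -/
lemma sum_c_eq {n j : ℕ} (F : Finset (Equiv.Perm (Fin n))) :
    ∑ π ∈ F, ((univ.filter fun S : Finset (Fin n) => S.card = j ∧ S.image ⇑π = S).card : ℝ)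
      = ∑ S ∈ univ.filter (fun S : Finset (Fin n) => S.card = j), (gcount F S S : ℝ) := by
  have lhs : ∀ π : Equiv.Perm (Fin n),
      ((univ.filter fun S : Finset (Fin n) => S.card = j ∧ S.image ⇑π = S).card : ℝ)
      = ∑ S : Finset (Fin n), (if S.card = j ∧ S.image ⇑π = S then (1:ℝ) else 0) := by
    intro π
    rw [Finset.card_filter]
    push_cast
    rfl
  simp only [lhs]
  rw [Finset.sum_comm]
  rw [Finset.sum_filter]
  apply Finset.sum_congr rfl
  intro S _
  have rhs : (gcount F S S : ℝ) = ∑ π ∈ F, (if S.image ⇑π = S then (1:ℝ) else 0) := by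
    unfold gcount
    rw [Finset.card_filter]
    push_cast
    rfl
  by_cases h : S.card = j
  · rw [if_pos h, rhs]
    apply Finset.sum_congr rfl
    intro π _
    simp [h]
  · rw [if_neg h]
    apply Finset.sum_eq_zero
    intro π _
    simp [h]

/-- Symmetry under inversion. -/
lemma sum_c_inv {n j k : ℕ} (A B : Finset (Fin n)) :
    ∑ π ∈ univ.filter (fun π : Equiv.Perm (Fin n) => ((A.image ⇑π) ∩ B).card = k),
      ((univ.filter fun S : Finset (Fin n) => S.card = j ∧ S.image ⇑π = S).card : ℝ)
    = ∑ π ∈ univ.filter (fun π : Equiv.Perm (Fin n) => ((B.image ⇑π) ∩ A).card = k),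
      ((univ.filter fun S : Finset (Fin n) => S.card = j ∧ S.image ⇑π = S).card : ℝ) := by
  have hcard : ∀ (π : Equiv.Perm (Fin n)) (U V : Finset (Fin n)),
      ((U.image ⇑π) ∩ V).card = ((V.image ⇑π⁻¹) ∩ U).card := by
    intro π U V
    have h1 : ((U.image ⇑π) ∩ V).image ⇑π⁻¹ = U ∩ V.image ⇑π⁻¹ := by
      rw [Finset.image_inter _ _ (π⁻¹).injective,
        image_perm_inv π U (U.image ⇑π) rfl]
    calc ((U.image ⇑π) ∩ V).card
        = (((U.image ⇑π) ∩ V).image ⇑π⁻¹).card :=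
          (Finset.card_image_of_injective _ (π⁻¹).injective).symm
      _ = (U ∩ V.image ⇑π⁻¹).card := by rw [h1]
      _ = ((V.image ⇑π⁻¹) ∩ U).card := by rw [Finset.inter_comm]
  have hfix : ∀ (π : Equiv.Perm (Fin n)) (S : Finset (Fin n)),
      S.image ⇑π = S ↔ S.image ⇑π⁻¹ = S := by
    intro π S
    constructor
    · intro h; exact image_perm_inv π S S h
    · intro h
      have := image_perm_inv π⁻¹ S S h
      rwa [inv_inv] at this
  refine Finset.sum_bij' (fun π _ => π⁻¹) (fun π _ => π⁻¹) ?_ ?_ ?_ ?_ ?_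
  · intro π hπ
    simp only [Finset.mem_filter, Finset.mem_univ, true_and] at hπ ⊢
    rw [← hπ, hcard π⁻¹ B A, inv_inv, Finset.inter_comm]
  · intro π hπ
    simp only [Finset.mem_filter, Finset.mem_univ, true_and] at hπ ⊢
    rw [← hπ, hcard π⁻¹ A B, inv_inv, Finset.inter_comm]
  · intro π _; simp
  · intro π _; simp
  · intro π _
    congr 1
    refine congrArg Finset.card ?_
    apply Finset.filter_congr
    intro S _
    exact and_congr Iff.rfl (hfix π S)

end Aux

/-- Partial character sums (vanishing case `min(a,b) < d` of Lemma 2.10): for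
`|A| = a ≤ d`, `|B| = b ≤ d` with `min(a,b) < d`, and `0 ≤ k ≤ min(a,b)`,
`∑_{π : |π(A) ∩ B| = k} χ_d(π) = 0`. -/
theorem restricted_character_sum_vanishes (n d : ℕ) (hn : 2 ≤ n) (hd : 2 * d ≤ n)
    (c : ℕ → Equiv.Perm (Fin n) → ℕ)
    (hc : ∀ j π, c j π =
      (Finset.univ.filter fun A : Finset (Fin n) => A.card = j ∧ A.image π = A).card)
    (chi : Equiv.Perm (Fin n) → ℝ)
    (hchi : ∀ π, chi π = (c d π : ℝ) - (if d = 0 then 0 else (c (d - 1) π : ℝ)))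
    (a b : ℕ) (ha : a ≤ d) (hb : b ≤ d) (hab : min a b < d)
    (A B : Finset (Fin n)) (hA : A.card = a) (hB : B.card = b)
    (k : ℕ) (hk : k ≤ min a b) :
    ∑ π ∈ Finset.univ.filter
        (fun π : Equiv.Perm (Fin n) => ((A.image π) ∩ B).card = k), chi π = 0 := by
  have hd1 : 1 ≤ d := by omega
  simp only [hchi, if_neg (by omega : ¬ d = 0)]
  rw [Finset.sum_sub_distrib, sub_eq_zero]
  simp only [hc]
  by_cases hcase : a < d
  · have hF : ∀ σ π : Equiv.Perm (Fin n), A.image ⇑σ = A →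
        ((π * σ) ∈ Finset.univ.filter
          (fun π : Equiv.Perm (Fin n) => ((A.image ⇑π) ∩ B).card = k) ↔
          π ∈ Finset.univ.filter
          (fun π : Equiv.Perm (Fin n) => ((A.image ⇑π) ∩ B).card = k)) := by
      intro σ π hσ
      simp only [Finset.mem_filter, Finset.mem_univ, true_and]
      rw [perm_image_mul, hσ]
    rw [sum_c_eq, sum_c_eq]
    exact key d a hd1 A hA hcase (by omega) _ hF
  · have hbd : b < d := by omega
    rw [sum_c_inv A B, sum_c_inv A B]
    have hF : ∀ σ π : Equiv.Perm (Fin n), B.image ⇑σ = B →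
        ((π * σ) ∈ Finset.univ.filter
          (fun π : Equiv.Perm (Fin n) => ((B.image ⇑π) ∩ A).card = k) ↔
          π ∈ Finset.univ.filter
          (fun π : Equiv.Perm (Fin n) => ((B.image ⇑π) ∩ A).card = k)) := by
      intro σ π hσ
      simp only [Finset.mem_filter, Finset.mem_univ, true_and]
      rw [perm_image_mul, hσ]
    rw [sum_c_eq, sum_c_eq]
    exact key d b hd1 B hB hbd (by omega) _ hF
end

section
/- Let n ≥ 1 and let π be a permutation of {1,…,n}. For 0 ≤ a, b ≤ n and 0 ≤ k, ℓ ≤ min(a,b), define f_{a,k}(π) = #{A ⊆ {1,…,n} : |A| = a, |π(A) ∩ A| = k} and g_{a,b,k,ℓ}(π) = #{(A,B) : A, B ⊆ {1,…,n}, |A| = a, |B| = b, |A ∩ B| = k, |π(A) ∩ B| = ℓ}. Then g_{b,a,k,ℓ}(π) = g_{a,b,k,ℓ}(π) = g_{a,b,ℓ,k}(π) = ∑_{j=0}^{a} [ ∑_{i=0}^{j} C(j,i)·C(a−j,k−i)·C(a−j,ℓ−i)·C(n−2a+j, b−k−ℓ+i) ] · f_{a,j}(π), where binomial coefficients with out-of-range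 arguments are zero. -/
/-- Binomial coefficient with integer arguments, zero when an argument is out of range. -/
def intChoose (m t : ℤ) : ℕ := if 0 ≤ t ∧ t ≤ m then m.toNat.choose t.toNat else 0


open Finset

lemma intChoose_of_nonneg {m t : ℤ} (hm : 0 ≤ m) (ht : 0 ≤ t) :
    intChoose m t = m.toNat.choose t.toNat := by
  unfold intChoose
  split_ifs with h
  · rfl
  · exact (Nat.choose_eq_zero_of_lt (by omega)).symm

lemma intChoose_of_neg {m t : ℤ} (ht : t < 0) : intChoose m t = 0 := by
  unfold intChoose; rw [if_neg]; omega

lemma split_count {α : Type*} [DecidableEq α] (U S : Finset α) (hS : S ⊆ U)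
    (p q : Finset α → Prop) [DecidablePred p] [DecidablePred q] :
    (U.powerset.filter fun B => p (B ∩ S) ∧ q (B \ S)).card
      = (S.powerset.filter p).card * ((U \ S).powerset.filter q).card := by
  rw [← Finset.card_product]
  apply Finset.card_nbij' (fun B => (B ∩ S, B \ S)) (fun CD => CD.1 ∪ CD.2)
  · intro B hB
    simp only [Finset.mem_coe, mem_filter, mem_powerset, mem_product] at *
    exact ⟨⟨inter_subset_right, hB.2.1⟩, sdiff_subset_sdiff hB.1 (le_refl _), hB.2.2⟩
  · intro CD hCD
    simp only [Finset.mem_coe, mem_filter, mem_powerset, mem_product] at *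
    obtain ⟨⟨hC, hp⟩, hD, hq⟩ := hCD
    have hCS : (CD.1 ∪ CD.2) ∩ S = CD.1 := by
      ext x
      simp only [mem_inter, mem_union]
      constructor
      · rintro ⟨h1 | h1, h2⟩
        · exact h1
        · exact absurd h2 (mem_sdiff.mp (hD h1)).2
      · intro h; exact ⟨Or.inl h, hC h⟩
    have hDS : (CD.1 ∪ CD.2) \ S = CD.2 := by
      ext x
      simp only [mem_sdiff, mem_union]
      constructor
      · rintro ⟨h1 | h1, h2⟩
        · exact absurd (hC h1) h2
        · exact h1
      · intro h; exact ⟨Or.inr h, (mem_sdiff.mp (hD h)).2⟩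
    refine ⟨union_subset (hC.trans hS) (hD.trans sdiff_subset), ?_, ?_⟩
    · rw [hCS]; exact hp
    · rw [hDS]; exact hq
  · intro B hB
    exact sup_inf_sdiff B S
  · intro CD hCD
    simp only [Finset.mem_coe, mem_filter, mem_powerset, mem_product] at hCD
    obtain ⟨⟨hC, _⟩, hD, _⟩ := hCD
    have hCS : (CD.1 ∪ CD.2) ∩ S = CD.1 := by
      ext x
      simp only [mem_inter, mem_union]
      constructor
      · rintro ⟨h1 | h1, h2⟩
        · exact h1
        · exact absurd h2 (mem_sdiff.mp (hD h1)).2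
      · intro h; exact ⟨Or.inl h, hC h⟩
    have hDS : (CD.1 ∪ CD.2) \ S = CD.2 := by
      ext x
      simp only [mem_sdiff, mem_union]
      constructor
      · rintro ⟨h1 | h1, h2⟩
        · exact absurd (hC h1) h2
        · exact h1
      · intro h; exact ⟨Or.inr h, (mem_sdiff.mp (hD h)).2⟩
    exact Prod.ext hCS hDS

lemma step_count {α : Type*} [DecidableEq α] (U S : Finset α) (hS : S ⊆ U) (c : ℕ)
    (q : Finset α → Prop) [DecidablePred q] :
    (U.powerset.filter fun B => (B ∩ S).card = c ∧ q (B \ S)).card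
      = S.card.choose c * ((U \ S).powerset.filter q).card := by
  rw [split_count U S hS (fun C => C.card = c) q]
  congr 1
  rw [← Finset.powersetCard_eq_filter, Finset.card_powersetCard]

lemma sdiff_inter_of_disjoint {α : Type*} [DecidableEq α] {S T : Finset α} (B : Finset α)
    (h : Disjoint S T) : (B \ S) ∩ T = B ∩ T := by
  ext x
  simp only [mem_inter, mem_sdiff]
  constructor
  · rintro ⟨⟨h1, _⟩, h2⟩; exact ⟨h1, h2⟩
  · rintro ⟨h1, h2⟩; exact ⟨⟨h1, fun hx => (Finset.disjoint_left.mp h hx) h2⟩, h2⟩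

lemma count_four {α : Type*} [DecidableEq α] [Fintype α]
    (S₁ S₂ S₃ S₄ : Finset α)
    (h12 : Disjoint S₁ S₂) (h13 : Disjoint S₁ S₃) (h14 : Disjoint S₁ S₄)
    (h23 : Disjoint S₂ S₃) (h24 : Disjoint S₂ S₄) (h34 : Disjoint S₃ S₄)
    (hcov : S₁ ∪ S₂ ∪ S₃ ∪ S₄ = univ) (c₁ c₂ c₃ c₄ : ℕ) :
    (univ.filter fun B : Finset α => (B ∩ S₁).card = c₁ ∧ (B ∩ S₂).card = c₂ ∧
      (B ∩ S₃).card = c₃ ∧ (B ∩ S₄).card = c₄).card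
      = S₁.card.choose c₁ * (S₂.card.choose c₂ * (S₃.card.choose c₃ * S₄.card.choose c₄)) := by
  have hmem : ∀ x : α, x ∈ S₁ ∨ x ∈ S₂ ∨ x ∈ S₃ ∨ x ∈ S₄ := by
    intro x
    have hx : x ∈ S₁ ∪ S₂ ∪ S₃ ∪ S₄ := hcov ▸ mem_univ x
    simpa [or_assoc] using mem_union.mp hx
  have hU3 : ((univ \ S₁) \ S₂) \ S₃ = S₄ := by
    ext x
    simp only [mem_sdiff, mem_univ, true_and]
    constructor
    · rintro ⟨⟨h1, h2⟩, h3⟩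
      rcases hmem x with h | h | h | h
      · exact absurd h h1
      · exact absurd h h2
      · exact absurd h h3
      · exact h
    · intro h
      exact ⟨⟨fun hx => Finset.disjoint_left.mp h14 hx h,
        fun hx => Finset.disjoint_left.mp h24 hx h⟩,
        fun hx => Finset.disjoint_left.mp h34 hx h⟩
  have key : (univ.filter fun B : Finset α => (B ∩ S₁).card = c₁ ∧ (B ∩ S₂).card = c₂ ∧
      (B ∩ S₃).card = c₃ ∧ (B ∩ S₄).card = c₄)
      = ((univ : Finset α).powerset.filter fun B => (B ∩ S₁).card = c₁ ∧
          (((B \ S₁) ∩ S₂).card = c₂ ∧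
            ((((B \ S₁) \ S₂) ∩ S₃).card = c₃ ∧ ((((B \ S₁) \ S₂) \ S₃) ∩ S₄).card = c₄))) := by
    rw [Finset.powerset_univ]
    apply Finset.filter_congr
    intro B _
    rw [sdiff_inter_of_disjoint _ h12,
      sdiff_inter_of_disjoint _ h23, sdiff_inter_of_disjoint _ h13,
      sdiff_inter_of_disjoint _ h34, sdiff_inter_of_disjoint _ h24,
      sdiff_inter_of_disjoint _ h14]
  rw [key,
    step_count (univ : Finset α) S₁ (subset_univ _) c₁
      (fun D => ((D ∩ S₂).card = c₂ ∧ (((D \ S₂) ∩ S₃).card = c₃ ∧ (((D \ S₂) \ S₃) ∩ S₄).card = c₄))),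
    step_count (univ \ S₁) S₂ (by rw [Finset.subset_sdiff]; exact ⟨subset_univ _, h12.symm⟩) c₂
      (fun E => (((E ∩ S₃).card = c₃ ∧ ((E \ S₃) ∩ S₄).card = c₄))),
    step_count ((univ \ S₁) \ S₂) S₃
      (by rw [Finset.subset_sdiff]; exact ⟨by rw [Finset.subset_sdiff]; exact ⟨subset_univ _, h13.symm⟩, h23.symm⟩) c₃
      (fun F => ((F ∩ S₄).card = c₄))]
  congr 1
  congr 1
  congr 1
  rw [hU3]
  have : (S₄.powerset.filter fun F => (F ∩ S₄).card = c₄)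
      = S₄.powerset.filter fun F => F.card = c₄ := by
    apply Finset.filter_congr
    intro F hF
    rw [Finset.inter_eq_left.mpr (Finset.mem_powerset.mp hF)]
  rw [this, ← Finset.powersetCard_eq_filter, Finset.card_powersetCard]

lemma count_B {n : ℕ} (π : Equiv.Perm (Fin n)) (A : Finset (Fin n)) (a b k ℓ j : ℕ)
    (hA : A.card = a) (hj : (A.image π ∩ A).card = j) :
    (univ.filter fun B : Finset (Fin n) =>
        B.card = b ∧ (A ∩ B).card = k ∧ (A.image π ∩ B).card = ℓ).card
      = ∑ i ∈ Finset.range (j + 1), j.choose i * intChoose ((a : ℤ) - j) ((k : ℤ) - i)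
          * intChoose ((a : ℤ) - j) ((ℓ : ℤ) - i)
          * intChoose ((n : ℤ) - 2 * a + j) ((b : ℤ) - k - ℓ + i) := by
  set P := A.image π with hPdef
  have hPcard : P.card = a := by
    rw [hPdef, Finset.card_image_of_injective _ π.injective, hA]
  set S₁ := P ∩ A with hS₁
  set S₂ := A \ P with hS₂
  set S₃ := P \ A with hS₃
  set S₄ := (A ∪ P)ᶜ with hS₄
  have hja : j ≤ a := by
    rw [← hj, ← hA]; exact card_le_card inter_subset_right
  have h1 : S₁.card = j := hj
  have hAP : (A ∩ P).card = j := by rw [inter_comm]; exact hj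
  have h2 : S₂.card = a - j := by
    have h := Finset.card_inter_add_card_sdiff A P
    rw [← hS₂] at h
    omega
  have h3 : S₃.card = a - j := by
    have h := Finset.card_inter_add_card_sdiff P A
    rw [← hS₁, ← hS₃] at h
    omega
  have hup : (A ∪ P).card = 2 * a - j := by
    have := Finset.card_union_add_card_inter A P
    omega
  have hupn : 2 * a - j ≤ n := by
    have := Finset.card_le_univ (A ∪ P)
    simp only [Finset.card_univ, Fintype.card_fin] at this
    omega
  have h4 : S₄.card = n - (2 * a - j) := by
    rw [hS₄, Finset.card_compl, hup, Fintype.card_fin]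
  have h12 : Disjoint S₁ S₂ := by
    rw [Finset.disjoint_left]; intro x hx hy
    rw [hS₁, mem_inter] at hx; rw [hS₂, mem_sdiff] at hy
    exact hy.2 hx.1
  have h13 : Disjoint S₁ S₃ := by
    rw [Finset.disjoint_left]; intro x hx hy
    rw [hS₁, mem_inter] at hx; rw [hS₃, mem_sdiff] at hy
    exact hy.2 hx.2
  have h14 : Disjoint S₁ S₄ := by
    rw [Finset.disjoint_left]; intro x hx hy
    rw [hS₁, mem_inter] at hx; rw [hS₄, Finset.mem_compl, mem_union] at hy
    exact hy (Or.inr hx.1)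
  have h23 : Disjoint S₂ S₃ := by
    rw [Finset.disjoint_left]; intro x hx hy
    rw [hS₂, mem_sdiff] at hx; rw [hS₃, mem_sdiff] at hy
    exact hy.2 hx.1
  have h24 : Disjoint S₂ S₄ := by
    rw [Finset.disjoint_left]; intro x hx hy
    rw [hS₂, mem_sdiff] at hx; rw [hS₄, Finset.mem_compl, mem_union] at hy
    exact hy (Or.inl hx.1)
  have h34 : Disjoint S₃ S₄ := by
    rw [Finset.disjoint_left]; intro x hx hy
    rw [hS₃, mem_sdiff] at hx; rw [hS₄, Finset.mem_compl, mem_union] at hy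
    exact hy (Or.inr hx.1)
  have hcov : S₁ ∪ S₂ ∪ S₃ ∪ S₄ = univ := by
    ext x
    simp only [hS₁, hS₂, hS₃, hS₄, mem_union, mem_inter, mem_sdiff, Finset.mem_compl,
      mem_univ, iff_true]
    tauto
  -- decomposition identities
  have dA : ∀ B : Finset (Fin n), (A ∩ B).card = (B ∩ S₁).card + (B ∩ S₂).card := by
    intro B
    have hu : A ∩ B = (B ∩ S₁) ∪ (B ∩ S₂) := by
      ext x
      simp only [hS₁, hS₂, mem_inter, mem_union, mem_sdiff]
      tauto
    rw [hu, Finset.card_union_of_disjoint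
      (h12.mono inter_subset_right inter_subset_right)]
  have dP : ∀ B : Finset (Fin n), (P ∩ B).card = (B ∩ S₁).card + (B ∩ S₃).card := by
    intro B
    have hu : P ∩ B = (B ∩ S₁) ∪ (B ∩ S₃) := by
      ext x
      simp only [hS₁, hS₃, mem_inter, mem_union, mem_sdiff]
      tauto
    rw [hu, Finset.card_union_of_disjoint
      (h13.mono inter_subset_right inter_subset_right)]
  have dB : ∀ B : Finset (Fin n),
      B.card = (B ∩ S₁).card + (B ∩ S₂).card + (B ∩ S₃).card + (B ∩ S₄).card := by
    intro B
    have hu : B = ((B ∩ S₁) ∪ (B ∩ S₂)) ∪ ((B ∩ S₃) ∪ (B ∩ S₄)) := by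
      ext x
      simp only [hS₁, hS₂, hS₃, hS₄, mem_inter, mem_union, mem_sdiff, Finset.mem_compl]
      constructor
      · intro hx
        by_cases hA' : x ∈ A <;> by_cases hP' : x ∈ P <;> tauto
      · tauto
    have d12 : Disjoint (B ∩ S₁) (B ∩ S₂) :=
      h12.mono inter_subset_right inter_subset_right
    have d34 : Disjoint (B ∩ S₃) (B ∩ S₄) :=
      h34.mono inter_subset_right inter_subset_right
    have dbig : Disjoint ((B ∩ S₁) ∪ (B ∩ S₂)) ((B ∩ S₃) ∪ (B ∩ S₄)) := by
      rw [Finset.disjoint_union_left, Finset.disjoint_union_right,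
        Finset.disjoint_union_right]
      exact ⟨⟨h13.mono inter_subset_right inter_subset_right,
        h14.mono inter_subset_right inter_subset_right⟩,
        h23.mono inter_subset_right inter_subset_right,
        h24.mono inter_subset_right inter_subset_right⟩
    calc B.card = (((B ∩ S₁) ∪ (B ∩ S₂)) ∪ ((B ∩ S₃) ∪ (B ∩ S₄))).card := by rw [← hu]
      _ = _ := by
        rw [Finset.card_union_of_disjoint dbig, Finset.card_union_of_disjoint d12,
          Finset.card_union_of_disjoint d34]
        ring
  rw [Finset.card_eq_sum_card_fiberwise
    (f := fun B : Finset (Fin n) => (B ∩ S₁).card) (t := Finset.range (j + 1))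
    (by
      intro B _
      rw [Finset.mem_coe, Finset.mem_range]
      show (B ∩ S₁).card < j + 1
      have : (B ∩ S₁).card ≤ S₁.card := card_le_card inter_subset_right
      omega)]
  refine Finset.sum_congr rfl fun i hi => ?_
  rw [Finset.mem_range] at hi
  rw [Finset.filter_filter]
  by_cases hfeas : i ≤ k ∧ i ≤ ℓ ∧ k + ℓ ≤ b + i
  · have hiff : ∀ B ∈ (univ : Finset (Finset (Fin n))),
        (((B.card = b ∧ (A ∩ B).card = k ∧ (P ∩ B).card = ℓ) ∧ (B ∩ S₁).card = i) ↔
          ((B ∩ S₁).card = i ∧ (B ∩ S₂).card = k - i ∧ (B ∩ S₃).card = ℓ - i ∧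
            (B ∩ S₄).card = b + i - k - ℓ)) := by
      intro B _
      have e1 := dA B
      have e2 := dP B
      have e3 := dB B
      omega
    rw [Finset.filter_congr hiff,
      count_four S₁ S₂ S₃ S₄ h12 h13 h14 h23 h24 h34 hcov i (k - i) (ℓ - i) (b + i - k - ℓ),
      h1, h2, h3, h4]
    have e2 : intChoose ((a : ℤ) - j) ((k : ℤ) - i) = (a - j).choose (k - i) := by
      rw [intChoose_of_nonneg (by omega) (by omega)]
      congr 1 <;> omega
    have e3 : intChoose ((a : ℤ) - j) ((ℓ : ℤ) - i) = (a - j).choose (ℓ - i) := by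
      rw [intChoose_of_nonneg (by omega) (by omega)]
      congr 1 <;> omega
    have e4 : intChoose ((n : ℤ) - 2 * a + j) ((b : ℤ) - k - ℓ + i)
        = (n - (2 * a - j)).choose (b + i - k - ℓ) := by
      rw [intChoose_of_nonneg (by omega) (by omega)]
      congr 1 <;> omega
    rw [e2, e3, e4]
    ring
  · have hempty : (univ.filter fun B : Finset (Fin n) =>
        ((B.card = b ∧ (A ∩ B).card = k ∧ (P ∩ B).card = ℓ) ∧ (B ∩ S₁).card = i)) = ∅ := by
      rw [Finset.filter_eq_empty_iff]
      rintro B _ ⟨⟨hb', hk', hl'⟩, hi'⟩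
      have e1 := dA B
      have e2 := dP B
      have e3 := dB B
      omega
    rw [hempty, Finset.card_empty]
    rcases (by omega : k < i ∨ ℓ < i ∨ b + i < k + ℓ) with h | h | h
    · rw [intChoose_of_neg (show ((k : ℤ) - i) < 0 by omega)]; ring
    · rw [intChoose_of_neg (show ((ℓ : ℤ) - i) < 0 by omega)]; ring
    · rw [intChoose_of_neg (show ((b : ℤ) - k - ℓ + i) < 0 by omega)]; ring

lemma card_pair_filter {α : Type*} [Fintype α] [DecidableEq α]
    (Q : Finset α → Finset α → Prop) [∀ A B, Decidable (Q A B)] :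
    (univ.filter fun AB : Finset α × Finset α => Q AB.1 AB.2).card
      = ∑ A : Finset α, (univ.filter fun B => Q A B).card := by
  rw [Finset.card_eq_sum_card_fiberwise
    (f := Prod.fst) (t := (univ : Finset (Finset α))) (fun x _ => mem_univ _)]
  refine Finset.sum_congr rfl fun A _ => ?_
  apply Finset.card_nbij' (fun AB => AB.2) (fun B => (A, B))
  · intro AB hAB
    simp only [Finset.mem_coe, Finset.mem_filter, Finset.mem_univ, true_and] at *
    obtain ⟨hQ, hfst⟩ := hAB
    rw [← hfst]; exact hQ
  · intro B hB
    simp only [Finset.mem_coe, Finset.mem_filter, Finset.mem_univ, true_and] at *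
    tauto
  · intro AB hAB
    simp only [Finset.mem_coe, Finset.mem_filter, Finset.mem_univ, true_and] at hAB
    exact Prod.ext hAB.2.symm rfl
  · intro B _
    rfl

lemma main_formula {n : ℕ} (π : Equiv.Perm (Fin n)) (a b k ℓ : ℕ) :
    (Finset.univ.filter fun AB : Finset (Fin n) × Finset (Fin n) =>
        AB.1.card = a ∧ AB.2.card = b ∧ (AB.1 ∩ AB.2).card = k ∧
          (AB.1.image π ∩ AB.2).card = ℓ).card
      = ∑ j ∈ Finset.range (a + 1),
        (∑ i ∈ Finset.range (j + 1),
          j.choose i * intChoose ((a : ℤ) - j) ((k : ℤ) - i) *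
            intChoose ((a : ℤ) - j) ((ℓ : ℤ) - i) *
              intChoose ((n : ℤ) - 2 * a + j) ((b : ℤ) - k - ℓ + i)) *
        (Finset.univ.filter fun A : Finset (Fin n) =>
          A.card = a ∧ (A.image π ∩ A).card = j).card := by
  rw [card_pair_filter (fun A B => A.card = a ∧ B.card = b ∧ (A ∩ B).card = k ∧
    (A.image π ∩ B).card = ℓ)]
  have step1 : ∀ A : Finset (Fin n),
      (univ.filter fun B : Finset (Fin n) => A.card = a ∧ B.card = b ∧ (A ∩ B).card = k ∧
        (A.image π ∩ B).card = ℓ).card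
      = if A.card = a then (univ.filter fun B : Finset (Fin n) =>
          B.card = b ∧ (A ∩ B).card = k ∧ (A.image π ∩ B).card = ℓ).card else 0 := by
    intro A
    by_cases h : A.card = a
    · rw [if_pos h]
      congr 1
      apply Finset.filter_congr
      intro B _
      simp [h]
    · rw [if_neg h]
      rw [Finset.card_eq_zero, Finset.filter_eq_empty_iff]
      intro B _
      tauto
  simp only [step1]
  rw [← Finset.sum_filter]
  rw [← Finset.sum_fiberwise_of_maps_to
    (g := fun A : Finset (Fin n) => (A.image π ∩ A).card) (t := Finset.range (a + 1))
    (by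
      intro A hA
      rw [Finset.mem_filter] at hA
      rw [Finset.mem_range]
      show (A.image π ∩ A).card < a + 1
      have : (A.image π ∩ A).card ≤ A.card := card_le_card inter_subset_right
      omega)]
  refine Finset.sum_congr rfl fun j hj => ?_
  rw [Finset.filter_filter]
  have hconst : ∀ A ∈ (univ.filter fun A : Finset (Fin n) =>
      A.card = a ∧ (A.image π ∩ A).card = j),
      (univ.filter fun B : Finset (Fin n) =>
        B.card = b ∧ (A ∩ B).card = k ∧ (A.image π ∩ B).card = ℓ).card
      = ∑ i ∈ Finset.range (j + 1), j.choose i * intChoose ((a : ℤ) - j) ((k : ℤ) - i)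
          * intChoose ((a : ℤ) - j) ((ℓ : ℤ) - i)
          * intChoose ((n : ℤ) - 2 * a + j) ((b : ℤ) - k - ℓ + i) := by
    intro A hA
    rw [Finset.mem_filter] at hA
    exact count_B π A a b k ℓ j hA.2.1 hA.2.2
  rw [Finset.sum_congr rfl hconst, Finset.sum_const, smul_eq_mul, mul_comm]

lemma g_swap {n : ℕ} (π : Equiv.Perm (Fin n)) (a b k ℓ : ℕ) :
    (Finset.univ.filter fun AB : Finset (Fin n) × Finset (Fin n) =>
      AB.1.card = b ∧ AB.2.card = a ∧ (AB.1 ∩ AB.2).card = k ∧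
        (AB.1.image π ∩ AB.2).card = ℓ).card
    = (Finset.univ.filter fun AB : Finset (Fin n) × Finset (Fin n) =>
      AB.1.card = a ∧ AB.2.card = b ∧ (AB.1 ∩ AB.2).card = ℓ ∧
        (AB.1.image π ∩ AB.2).card = k).card := by
  have hcard : ∀ S : Finset (Fin n), (S.image π).card = S.card :=
    fun S => Finset.card_image_of_injective _ π.injective
  have hcard' : ∀ S : Finset (Fin n), (S.image π.symm).card = S.card :=
    fun S => Finset.card_image_of_injective _ π.symm.injective
  have himg : ∀ S : Finset (Fin n), (S.image π.symm).image π = S := by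
    intro S; simp [Finset.image_image]
  have himg' : ∀ S : Finset (Fin n), (S.image π).image π.symm = S := by
    intro S; simp [Finset.image_image]
  apply Finset.card_nbij' (fun AB => (AB.2, AB.1.image π))
    (fun AB => (AB.2.image π.symm, AB.1))
  · rintro ⟨A, B⟩ hAB
    simp only [Finset.mem_coe, Finset.mem_filter, Finset.mem_univ, true_and] at hAB ⊢
    obtain ⟨hA, hB, hk, hl⟩ := hAB
    refine ⟨hB, by rw [hcard, hA], by rw [inter_comm]; exact hl, ?_⟩
    rw [← Finset.image_inter _ _ π.injective, hcard, inter_comm]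
    exact hk
  · rintro ⟨A, B⟩ hAB
    simp only [Finset.mem_coe, Finset.mem_filter, Finset.mem_univ, true_and] at hAB ⊢
    obtain ⟨hA, hB, hl, hk⟩ := hAB
    refine ⟨by rw [hcard', hB], hA, ?_, ?_⟩
    · rw [← Finset.card_image_of_injective (B.image π.symm ∩ A) π.injective,
        Finset.image_inter _ _ π.injective, himg, inter_comm]
      exact hk
    · rw [himg, inter_comm]
      exact hl
  · rintro ⟨A, B⟩ hAB
    simp only [himg']
  · rintro ⟨A, B⟩ hAB
    simp only [himg]

/-- Proposition A.2: the pair-counting class functions `g_{a,b,k,ℓ}` are symmetric and are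
integer combinations of the single-set counting functions `f_{a,j}`. -/
theorem g_symm_and_g_eq_comb_f (n : ℕ) (hn : 1 ≤ n) (π : Equiv.Perm (Fin n))
    (f : ℕ → ℕ → Equiv.Perm (Fin n) → ℕ)
    (hf : ∀ a k σ, f a k σ = (Finset.univ.filter fun A : Finset (Fin n) =>
      A.card = a ∧ (A.image σ ∩ A).card = k).card)
    (g : ℕ → ℕ → ℕ → ℕ → Equiv.Perm (Fin n) → ℕ)
    (hg : ∀ a b k ℓ σ, g a b k ℓ σ =
      (Finset.univ.filter fun AB : Finset (Fin n) × Finset (Fin n) =>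
        AB.1.card = a ∧ AB.2.card = b ∧ (AB.1 ∩ AB.2).card = k ∧
          (AB.1.image σ ∩ AB.2).card = ℓ).card)
    (a b k ℓ : ℕ) (ha : a ≤ n) (hb : b ≤ n) (hk : k ≤ min a b) (hℓ : ℓ ≤ min a b) :
    g b a k ℓ π = g a b k ℓ π ∧
    g a b k ℓ π = g a b ℓ k π ∧
    g a b k ℓ π = ∑ j ∈ Finset.range (a + 1),
      (∑ i ∈ Finset.range (j + 1),
        j.choose i * intChoose ((a : ℤ) - j) ((k : ℤ) - i) *
          intChoose ((a : ℤ) - j) ((ℓ : ℤ) - i) *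
            intChoose ((n : ℤ) - 2 * a + j) ((b : ℤ) - k - ℓ + i)) * f a j π := by
  have key : ∀ a' b' k' ℓ' : ℕ, g a' b' k' ℓ' π = ∑ j ∈ Finset.range (a' + 1),
      (∑ i ∈ Finset.range (j + 1),
        j.choose i * intChoose ((a' : ℤ) - j) ((k' : ℤ) - i) *
          intChoose ((a' : ℤ) - j) ((ℓ' : ℤ) - i) *
            intChoose ((n : ℤ) - 2 * a' + j) ((b' : ℤ) - k' - ℓ' + i)) * f a' j π := by
    intro a' b' k' ℓ'
    rw [hg]
    simp only [hf]
    exact main_formula π a' b' k' ℓ'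
  have symkl : ∀ k' ℓ' : ℕ, g a b k' ℓ' π = g a b ℓ' k' π := by
    intro k' ℓ'
    rw [key a b k' ℓ', key a b ℓ' k']
    refine Finset.sum_congr rfl fun j _ => ?_
    congr 1
    refine Finset.sum_congr rfl fun i _ => ?_
    rw [show (b : ℤ) - ℓ' - k' + i = (b : ℤ) - k' - ℓ' + i from by ring]
    ring
  refine ⟨?_, symkl k ℓ, key a b k ℓ⟩
  have h1 : g b a k ℓ π = g a b ℓ k π := by
    rw [hg, hg]
    exact g_swap π a b k ℓ
  rw [h1, ← symkl k ℓ]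
end

section
/- Let 0 ≤ k ≤ a ≤ d with 2d ≤ n. For a permutation π of {1,…,n} let c_j(π) be the number of j-element subsets A with π(A) = A (with c_{−1} = 0), set χ_d = c_d − c_{d−1}, and let f_{a,k}(π) = #{A ⊆ {1,…,n} : |A| = a, |π(A) ∩ A| = k}. Then (1/n!) ∑_{π ∈ S_n} χ_d(π) · f_{a,k}(π) equals 0 if a < d, and equals (−1)^{d+k} · C(d,k) if a = d. -/
open Finset

variable {n : ℕ}

/-- Pasting lemma: given two colorings of `Fin n` with equal color class sizes,
there is a permutation transporting one coloring to the other. -/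
lemma exists_perm_matching {ι : Type*} [DecidableEq ι] (g g' : Fin n → ι)
    (h : ∀ c2 : ι, (univ.filter fun x => g x = c2).card = (univ.filter fun x => g' x = c2).card) :
    ∃ π : Equiv.Perm (Fin n), ∀ x, g' (π x) = g x := by
  classical
  have hcard : ∀ c2 : ι, Fintype.card {x // g x = c2} = Fintype.card {x // g' x = c2} := by
    intro c2
    rw [Fintype.card_subtype, Fintype.card_subtype]
    exact h c2
  have eqv : ∀ c2 : ι, {x // g x = c2} ≃ {x // g' x = c2} := fun c2 =>
    Fintype.equivOfCardEq (hcard c2)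
  refine ⟨((Equiv.sigmaFiberEquiv g).symm.trans
    ((Equiv.sigmaCongrRight eqv).trans (Equiv.sigmaFiberEquiv g'))), fun x => ?_⟩
  simp only [Equiv.trans_apply, Equiv.sigmaFiberEquiv, Equiv.sigmaCongrRight,
    Equiv.coe_fn_symm_mk, Equiv.coe_fn_mk]
  exact (eqv (g x) ⟨x, rfl⟩).2

lemma image_eq_of_iff (π : Equiv.Perm (Fin n)) (A A' : Finset (Fin n))
    (h : ∀ x, π x ∈ A' ↔ x ∈ A) : A.image π = A' := by
  ext y
  simp only [mem_image]
  constructor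
  · rintro ⟨x, hx, rfl⟩; exact (h x).2 hx
  · intro hy
    refine ⟨π.symm y, ?_, by simp⟩
    have := h (π.symm y)
    simp only [Equiv.apply_symm_apply] at this
    exact this.1 hy

/-- Transport two finsets simultaneously by a permutation. -/
lemma exists_perm_two_sets (A B A' B' : Finset (Fin n)) (hA : A.card = A'.card)
    (hB : B.card = B'.card) (hAB : (A ∩ B).card = (A' ∩ B').card) :
    ∃ π : Equiv.Perm (Fin n), A.image π = A' ∧ B.image π = B' := by
  classical
  have key : ∀ c2 : Bool × Bool,
      (univ.filter fun x => ((decide (x ∈ A), decide (x ∈ B)) : Bool × Bool) = c2).card =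
      (univ.filter fun x => ((decide (x ∈ A'), decide (x ∈ B')) : Bool × Bool) = c2).card := by
    have e1 : ∀ (C D : Finset (Fin n)),
        (univ.filter fun x => ((decide (x ∈ C), decide (x ∈ D)) : Bool × Bool) = (true, true)) =
          C ∩ D := by intro C D; ext x; simp
    have e2 : ∀ (C D : Finset (Fin n)),
        (univ.filter fun x => ((decide (x ∈ C), decide (x ∈ D)) : Bool × Bool) = (true, false)) =
          C \ D := by intro C D; ext x; simp [Finset.mem_sdiff]
    have e3 : ∀ (C D : Finset (Fin n)),
        (univ.filter fun x => ((decide (x ∈ C), decide (x ∈ D)) : Bool × Bool) = (false, true)) =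
          D \ C := by intro C D; ext x; simp [Finset.mem_sdiff, And.comm]
    have e4 : ∀ (C D : Finset (Fin n)),
        (univ.filter fun x => ((decide (x ∈ C), decide (x ∈ D)) : Bool × Bool) = (false, false)) =
          (C ∪ D)ᶜ := by intro C D; ext x; simp [Finset.mem_compl]
    have hsd : ∀ (C D : Finset (Fin n)), (C ∩ D).card + (C \ D).card = C.card :=
      fun C D => Finset.card_inter_add_card_sdiff C D
    have hun : ∀ (C D : Finset (Fin n)), (C ∪ D).card + (C ∩ D).card = C.card + D.card :=
      fun C D => Finset.card_union_add_card_inter C D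
    have hcm : ∀ (C D : Finset (Fin n)), ((C ∪ D)ᶜ).card = n - (C ∪ D).card := by
      intro C D; rw [Finset.card_compl, Fintype.card_fin]
    have hle : ∀ (C D : Finset (Fin n)), (C ∪ D).card ≤ n := by
      intro C D
      simpa using Finset.card_le_card (Finset.subset_univ (C ∪ D))
    rintro ⟨b1, b2⟩
    have hBA : (B ∩ A).card = (B' ∩ A').card := by rw [Finset.inter_comm, Finset.inter_comm B']; exact hAB
    cases b1 <;> cases b2
    · rw [e4, e4, hcm, hcm]
      have := hun A B; have := hun A' B'; have := hle A B; have := hle A' B'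
      omega
    · rw [e3, e3]
      have := hsd B A; have := hsd B' A'
      omega
    · rw [e2, e2]
      have := hsd A B; have := hsd A' B'
      omega
    · rw [e1, e1, hAB]
  obtain ⟨π, hπ⟩ := exists_perm_matching
    (fun x => ((decide (x ∈ A), decide (x ∈ B)) : Bool × Bool))
    (fun x => ((decide (x ∈ A'), decide (x ∈ B')) : Bool × Bool)) key
  refine ⟨π, image_eq_of_iff π A A' fun x => ?_, image_eq_of_iff π B B' fun x => ?_⟩
  · have := congrArg Prod.fst (hπ x)
    simpa using this
  · have := congrArg Prod.snd (hπ x)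
    simpa using this

lemma card_filter_equiv {β : Type*} [Fintype β] [DecidableEq β] (e : β ≃ β)
    (P Q : β → Prop) [DecidablePred P] [DecidablePred Q] (h : ∀ x, P x ↔ Q (e x)) :
    (univ.filter P).card = (univ.filter Q).card := by
  apply Finset.card_bij (fun x _ => e x)
  · intro x hx
    simp only [mem_filter, mem_univ, true_and] at hx ⊢
    exact (h x).1 hx
  · intro x hx y hy hxy
    exact e.injective hxy
  · intro y hy
    simp only [mem_filter, mem_univ, true_and] at hy
    exact ⟨e.symm y, by simp [mem_filter, (h (e.symm y)).2 (by simpa using hy)]⟩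

lemma image_symm_eq {π : Equiv.Perm (Fin n)} {A A' : Finset (Fin n)}
    (h : A.image π = A') : A'.image π.symm = A := by
  subst h
  rw [Finset.image_image]
  simp

lemma image_mul (σ π : Equiv.Perm (Fin n)) (A : Finset (Fin n)) :
    A.image ⇑(σ * π) = (A.image π).image σ := by
  rw [Finset.image_image]
  rfl

/-- number of permutations stabilizing `B` setwise -/
def stC (n : ℕ) (B : Finset (Fin n)) : ℕ :=
  (univ.filter fun π : Equiv.Perm (Fin n) => B.image π = B).card

/-- number of permutations stabilizing `B` and carrying `A` to `A'` -/
def trC (n : ℕ) (B A A' : Finset (Fin n)) : ℕ :=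
  (univ.filter fun π : Equiv.Perm (Fin n) => B.image π = B ∧ A.image π = A').card

lemma image_card (π : Equiv.Perm (Fin n)) (A : Finset (Fin n)) :
    (A.image π).card = A.card := Finset.card_image_of_injective A π.injective

lemma image_inter_perm (π : Equiv.Perm (Fin n)) (A B : Finset (Fin n)) :
    (A ∩ B).image π = A.image π ∩ B.image π :=
  Finset.image_inter A B π.injective

/-- S1: the transporter count only depends on the orbit data. -/
lemma trans_card_eq (B A A' C2 C' : Finset (Fin n)) (hA : A.card = C2.card)
    (hA' : A'.card = C'.card) (hiA : (A ∩ B).card = (C2 ∩ B).card)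
    (hiA' : (A' ∩ B).card = (C' ∩ B).card) :
    trC n B A A' = trC n B C2 C' := by
  classical
  obtain ⟨σ, hσA, hσB⟩ := exists_perm_two_sets A B C2 B hA rfl hiA
  obtain ⟨τ, hτA, hτB⟩ := exists_perm_two_sets A' B C' B hA' rfl hiA'
  apply card_filter_equiv (Equiv.mulRight σ⁻¹ |>.trans (Equiv.mulLeft τ))
  intro π
  simp only [Equiv.trans_apply, Equiv.coe_mulRight, Equiv.coe_mulLeft]
  constructor
  · rintro ⟨h1, h2⟩
    constructor
    · show B.image ⇑(τ * (π * σ⁻¹)) = B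
      rw [image_mul, image_mul]
      have : B.image ⇑σ⁻¹ = B := image_symm_eq hσB
      rw [this, h1, hτB]
    · show C2.image ⇑(τ * (π * σ⁻¹)) = C'
      rw [image_mul, image_mul]
      have : C2.image ⇑σ⁻¹ = A := by
        have := image_symm_eq hσA
        exact this
      rw [this, h2, hτA]
  · rintro ⟨h1, h2⟩
    have e1 : B.image ⇑(τ * (π * σ⁻¹)) = B := h1
    have e2 : C2.image ⇑(τ * (π * σ⁻¹)) = C' := h2
    have hsB : B.image ⇑σ⁻¹ = B := image_symm_eq hσB
    have hsA : C2.image ⇑σ⁻¹ = A := image_symm_eq hσA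
    rw [image_mul, image_mul, hsB] at e1
    rw [image_mul, image_mul, hsA] at e2
    constructor
    · rw [← image_symm_eq e1]; exact image_symm_eq hτB
    · rw [← image_symm_eq e2]; exact image_symm_eq hτA

/-- S2: stabilizer decomposes into transporters, fibered over the image of `A`. -/
lemma stab_eq_sum_trans (B A : Finset (Fin n)) :
    stC n B = ∑ A' ∈ univ.filter fun A' : Finset (Fin n) =>
        A'.card = A.card ∧ (A' ∩ B).card = (A ∩ B).card, trC n B A A' := by
  classical
  unfold stC trC
  rw [Finset.card_eq_sum_card_fiberwise (f := fun π : Equiv.Perm (Fin n) => A.image π)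
    (t := univ.filter fun A' : Finset (Fin n) =>
        A'.card = A.card ∧ (A' ∩ B).card = (A ∩ B).card)]
  · apply Finset.sum_congr rfl
    intro A' _
    rw [Finset.filter_filter]
  · intro π hπ
    simp only [mem_coe, mem_filter, mem_univ, true_and] at hπ ⊢
    refine ⟨image_card π A, ?_⟩
    conv_lhs => rw [← hπ]
    rw [← image_inter_perm, image_card]

/-- S5: existence of a set of size `b` meeting `B` in exactly `i` elements. -/
lemma exists_rep (B : Finset (Fin n)) (j b i : ℕ) (hB : B.card = j) (hij : i ≤ j)
    (hib : i ≤ b) (hbn : j + b ≤ n) :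
    ∃ A : Finset (Fin n), A.card = b ∧ (A ∩ B).card = i := by
  classical
  obtain ⟨A1, hA1s, hA1c⟩ := Finset.exists_subset_card_eq (show i ≤ B.card by rw [hB]; exact hij)
  have hc : b - i ≤ Bᶜ.card := by
    rw [Finset.card_compl, Fintype.card_fin, hB]
    omega
  obtain ⟨A2, hA2s, hA2c⟩ := Finset.exists_subset_card_eq hc
  refine ⟨A1 ∪ A2, ?_, ?_⟩
  · have hdisj : Disjoint A1 A2 := by
      apply Finset.disjoint_left.2
      intro x hx1 hx2
      exact (Finset.mem_compl.1 (hA2s hx2)) (hA1s hx1)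
    rw [Finset.card_union_of_disjoint hdisj, hA1c, hA2c]
    omega
  · have h1 : A1 ∩ B = A1 := Finset.inter_eq_left.2 hA1s
    have h2 : A2 ∩ B = ∅ := by
      apply Finset.eq_empty_of_forall_notMem
      intro x hx
      have := Finset.mem_of_mem_inter_left hx
      exact (Finset.mem_compl.1 (hA2s this)) (Finset.mem_of_mem_inter_right hx)
    rw [Finset.union_inter_distrib_right, h1, h2, Finset.union_empty, hA1c]

/-- S3/S4: sum of diagonal transporter counts over a class equals the stabilizer count. -/
lemma sum_diag_trans (B : Finset (Fin n)) (b i : ℕ) (A0 : Finset (Fin n))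
    (hA0 : A0.card = b) (hA0i : (A0 ∩ B).card = i) :
    ∑ A ∈ univ.filter fun A : Finset (Fin n) => A.card = b ∧ (A ∩ B).card = i,
      trC n B A A = stC n B := by
  classical
  have hconst : ∀ A ∈ univ.filter fun A : Finset (Fin n) => A.card = b ∧ (A ∩ B).card = i,
      trC n B A A = trC n B A0 A0 := by
    intro A hA
    simp only [mem_filter, mem_univ, true_and] at hA
    exact trans_card_eq B A A A0 A0 (by rw [hA.1, hA0]) (by rw [hA.1, hA0])
      (by rw [hA.2, hA0i]) (by rw [hA.2, hA0i])
  rw [Finset.sum_congr rfl hconst, Finset.sum_const, smul_eq_mul]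
  have hdecomp := stab_eq_sum_trans B A0
  rw [hA0, hA0i] at hdecomp
  have hconst2 : ∀ A' ∈ univ.filter fun A' : Finset (Fin n) => A'.card = b ∧ (A' ∩ B).card = i,
      trC n B A0 A' = trC n B A0 A0 := by
    intro A' hA'
    simp only [mem_filter, mem_univ, true_and] at hA'
    exact trans_card_eq B A0 A' A0 A0 rfl (by rw [hA'.1, hA0]) rfl (by rw [hA'.2, hA0i])
  rw [Finset.sum_congr rfl hconst2, Finset.sum_const, smul_eq_mul] at hdecomp
  exact hdecomp.symm

/-- S6: sum of stabilizer counts over all `j`-sets is `n!`. -/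
lemma sum_stab (j : ℕ) (B0 : Finset (Fin n)) (hB0 : B0.card = j) :
    ∑ B ∈ univ.filter fun B : Finset (Fin n) => B.card = j, stC n B = n.factorial := by
  classical
  -- each stab equals the fiber of π ↦ B0.image π over B
  have hfib : ∀ B ∈ univ.filter fun B : Finset (Fin n) => B.card = j,
      stC n B = ((univ : Finset (Equiv.Perm (Fin n))).filter
        fun π : Equiv.Perm (Fin n) => B0.image ⇑π = B).card := by
    intro B hB
    simp only [mem_filter, mem_univ, true_and] at hB
    obtain ⟨σ, hσ, -⟩ := exists_perm_two_sets B0 B0 B B (by rw [hB0, hB]) (by rw [hB0, hB])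
      (by simp [hB0, hB])
    unfold stC
    apply card_filter_equiv (Equiv.mulRight σ)
    intro π
    show B.image ⇑π = B ↔ B0.image ⇑(π * σ) = B
    rw [image_mul, hσ]
  rw [Finset.sum_congr rfl hfib]
  rw [← Finset.card_eq_sum_card_fiberwise (f := fun π : Equiv.Perm (Fin n) => B0.image ⇑π)]
  · simp [Fintype.card_perm]
  · intro π _
    simp only [mem_coe, mem_filter, mem_univ, true_and]
    rw [image_card, hB0]

/-- the counting function `c_j` -/
def cntD (n j : ℕ) (π : Equiv.Perm (Fin n)) : ℕ :=
  (univ.filter fun A : Finset (Fin n) => A.card = j ∧ A.image ⇑π = A).card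

/-- Inner sum over the stabilizer of `B`. -/
lemma sum_stab_cnt (j b : ℕ) (hjb : j + b ≤ n) (B : Finset (Fin n)) (hB : B.card = j) :
    ∑ π ∈ univ.filter fun π : Equiv.Perm (Fin n) => B.image ⇑π = B, cntD n b π
      = (min j b + 1) * stC n B := by
  classical
  have step1 : ∑ π ∈ univ.filter fun π : Equiv.Perm (Fin n) => B.image ⇑π = B, cntD n b π
      = ∑ A ∈ univ.filter fun A : Finset (Fin n) => A.card = b, trC n B A A := by
    unfold cntD trC
    simp only [Finset.card_filter]
    rw [Finset.sum_comm, Finset.sum_filter (s := (univ : Finset (Finset (Fin n))))]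
    apply Finset.sum_congr rfl
    intro A _
    by_cases hA : A.card = b
    · simp only [hA, true_and, if_true]
      rw [← Finset.card_filter, ← Finset.card_filter, Finset.filter_filter]
    · simp [hA]
  rw [step1]
  -- now group the `A`'s by the size of `A ∩ B`
  have hmaps : ∀ A ∈ univ.filter fun A : Finset (Fin n) => A.card = b,
      (A ∩ B).card ∈ Finset.range (min j b + 1) := by
    intro A hA
    simp only [mem_filter, mem_univ, true_and] at hA
    rw [Finset.mem_range, Nat.lt_succ_iff]
    exact le_min (by rw [← hB]; exact Finset.card_le_card Finset.inter_subset_right)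
      (by rw [← hA]; exact Finset.card_le_card Finset.inter_subset_left)
  rw [← Finset.sum_fiberwise_of_maps_to hmaps (fun A => trC n B A A)]
  have hinner : ∀ i ∈ Finset.range (min j b + 1),
      ∑ A ∈ (univ.filter fun A : Finset (Fin n) => A.card = b).filter
        (fun A => (A ∩ B).card = i), trC n B A A = stC n B := by
    intro i hi
    rw [Finset.mem_range, Nat.lt_succ_iff] at hi
    obtain ⟨A0, hA0c, hA0i⟩ := exists_rep B j b i hB (hi.trans (min_le_left _ _))
      (hi.trans (min_le_right _ _)) hjb
    rw [Finset.filter_filter]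
    exact sum_diag_trans B b i A0 hA0c hA0i
  rw [Finset.sum_congr rfl hinner, Finset.sum_const, Finset.card_range, smul_eq_mul]

/-- Key inner product: `∑_π c_j(π) c_b(π) = n! (min j b + 1)`. -/
lemma sum_cnt_mul_cnt (j b : ℕ) (hjb : j + b ≤ n) :
    ∑ π : Equiv.Perm (Fin n), cntD n j π * cntD n b π = (min j b + 1) * n.factorial := by
  classical
  have expand : ∀ π : Equiv.Perm (Fin n), cntD n j π * cntD n b π
      = ∑ B : Finset (Fin n), if B.card = j ∧ B.image ⇑π = B then cntD n b π else 0 := by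
    intro π
    rw [cntD, Finset.card_filter, Finset.sum_mul]
    apply Finset.sum_congr rfl
    intro B _
    rw [ite_mul, one_mul, zero_mul]
  simp only [expand]
  rw [Finset.sum_comm]
  have step : ∀ B : Finset (Fin n),
      (∑ π : Equiv.Perm (Fin n), if B.card = j ∧ B.image ⇑π = B then cntD n b π else 0)
      = if B.card = j then (min j b + 1) * stC n B else 0 := by
    intro B
    by_cases hB : B.card = j
    · simp only [hB, true_and, if_true]
      rw [← Finset.sum_filter, sum_stab_cnt j b hjb B hB]
    · simp [hB]
  rw [Finset.sum_congr rfl fun B _ => step B]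
  rw [← Finset.sum_filter, ← Finset.mul_sum]
  have hj : j ≤ n := le_trans (Nat.le_add_right j b) hjb
  obtain ⟨B0, -, hB0⟩ := Finset.exists_subset_card_eq (show j ≤ (univ : Finset (Fin n)).card by simpa using hj)
  rw [sum_stab j B0 hB0]

/-- the counting function `f_{a,k}` -/
def fD (n a k : ℕ) (π : Equiv.Perm (Fin n)) : ℕ :=
  (univ.filter fun A : Finset (Fin n) => A.card = a ∧ (A.image ⇑π ∩ A).card = k).card

lemma fD_diag (a : ℕ) (π : Equiv.Perm (Fin n)) : fD n a a π = cntD n a π := by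
  unfold fD cntD
  congr 1
  apply Finset.filter_congr
  intro A _
  by_cases hA : A.card = a
  · simp only [hA, true_and]
    constructor
    · intro h
      have hsub : A.image ⇑π ∩ A ⊆ A.image ⇑π := Finset.inter_subset_left
      have : A.image ⇑π ∩ A = A.image ⇑π :=
        Finset.eq_of_subset_of_card_le hsub (by rw [h, image_card, hA])
      rw [← this]
      apply Finset.eq_of_subset_of_card_le Finset.inter_subset_right
      rw [this, image_card, hA]
    · intro h; rw [h, Finset.inter_self, hA]
  · simp [hA]

/-- Counting supersets of a fixed set. -/
lemma card_supersets (S : Finset (Fin n)) (a : ℕ) (ha : a ≤ n) :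
    (univ.filter fun A : Finset (Fin n) => A.card = a ∧ S ⊆ A).card
      = (n - S.card).choose (n - a) := by
  classical
  have : (univ.filter fun A : Finset (Fin n) => A.card = a ∧ S ⊆ A).card
      = (Finset.powersetCard (n - a) Sᶜ).card := by
    apply Finset.card_bij (fun A _ => Aᶜ)
    · intro A hA
      simp only [mem_filter, mem_univ, true_and] at hA
      rw [Finset.mem_powersetCard]
      refine ⟨Finset.compl_subset_compl.2 hA.2, ?_⟩
      rw [Finset.card_compl, Fintype.card_fin, hA.1]
    · intro A _ A' _ h
      simpa using congrArg compl h
    · intro T hT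
      rw [Finset.mem_powersetCard] at hT
      refine ⟨Tᶜ, ?_, compl_compl T⟩
      simp only [mem_filter, mem_univ, true_and]
      constructor
      · rw [Finset.card_compl, Fintype.card_fin, hT.2]
        omega
      · rw [← compl_compl S]
        exact Finset.compl_subset_compl.2 hT.1
  rw [this, Finset.card_powersetCard, Finset.card_compl, Fintype.card_fin]

lemma subset_image_iff_perm_s14 (π : Equiv.Perm (Fin n)) (K A : Finset (Fin n)) :
    K ⊆ A.image ⇑π ↔ K.image ⇑π.symm ⊆ A := by
  constructor
  · intro h x hx
    simp only [mem_image] at hx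
    obtain ⟨y, hy, rfl⟩ := hx
    have := h hy
    simp only [mem_image] at this
    obtain ⟨z, hz, hzy⟩ := this
    rw [← hzy]
    simpa using hz
  · intro h x hx
    have : π.symm x ∈ A := h (Finset.mem_image_of_mem _ hx)
    simp only [mem_image]
    exact ⟨π.symm x, this, by simp⟩

/-- The key linear relation between the `f_{a,k}` for different `a`, for each fixed `π`. -/
lemma f_relation (π : Equiv.Perm (Fin n)) (a r : ℕ) (hra : r ≤ a) (han : a ≤ n) :
    ∑ k' ∈ Finset.range (a + 1), k'.choose r * fD n a k' π
      = ∑ s ∈ Finset.range (r + 1), (n - (2 * r - s)).choose (n - a) * fD n r s π := by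
  classical
  have hmaps : ∀ (m : ℕ), ∀ A ∈ univ.filter fun A : Finset (Fin n) => A.card = m,
      (A.image ⇑π ∩ A).card ∈ Finset.range (m + 1) := by
    intro m A hA
    simp only [mem_filter, mem_univ, true_and] at hA
    rw [Finset.mem_range, Nat.lt_succ_iff, ← hA]
    exact Finset.card_le_card Finset.inter_subset_right
  -- LHS counts pairs (A, K), K ⊆ A ∩ πA, |A| = a, |K| = r, grouped by A
  have lhs_eq : ∑ k' ∈ Finset.range (a + 1), k'.choose r * fD n a k' π
      = ∑ A ∈ univ.filter fun A : Finset (Fin n) => A.card = a,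
          ((A.image ⇑π ∩ A).card).choose r := by
    rw [← Finset.sum_fiberwise_of_maps_to (hmaps a)
      (fun A => ((A.image ⇑π ∩ A).card).choose r)]
    apply Finset.sum_congr rfl
    intro k' _
    rw [Finset.filter_filter]
    trans (∑ _A ∈ univ.filter fun A : Finset (Fin n) =>
        A.card = a ∧ (A.image ⇑π ∩ A).card = k', k'.choose r)
    · unfold fD
      rw [Finset.sum_const, smul_eq_mul, mul_comm]
    · exact Finset.sum_congr rfl fun A hA => by
        rw [(Finset.mem_filter.1 hA).2.2]
  rw [lhs_eq]
  -- rewrite binomials as subset counts and swap the order of summation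
  have subs : ∀ A : Finset (Fin n), ((A.image ⇑π ∩ A).card).choose r
      = ∑ K : Finset (Fin n), if K.card = r ∧ K ⊆ A.image ⇑π ∩ A then 1 else 0 := by
    intro A
    rw [← Finset.card_filter, ← Finset.card_powersetCard]
    congr 1
    ext K
    simp [Finset.mem_powersetCard, and_comm]
  rw [Finset.sum_congr rfl fun A _ => subs A, Finset.sum_comm]
  -- now: for each K of size r, count the supersets
  have step : ∀ K : Finset (Fin n),
      (∑ A ∈ univ.filter fun A : Finset (Fin n) => A.card = a,
        if K.card = r ∧ K ⊆ A.image ⇑π ∩ A then 1 else 0)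
      = if K.card = r then (n - (2 * r - (K.image ⇑π ∩ K).card)).choose (n - a) else 0 := by
    intro K
    by_cases hK : K.card = r
    · simp only [hK, true_and, if_true]
      have hcond : ∀ A : Finset (Fin n), (K ⊆ A.image ⇑π ∩ A) ↔ (K.image ⇑π.symm ∪ K ⊆ A) := by
        intro A
        simp only [Finset.subset_inter_iff, Finset.union_subset_iff, subset_image_iff_perm_s14]
      have : (∑ A ∈ univ.filter fun A : Finset (Fin n) => A.card = a,
          if K ⊆ A.image ⇑π ∩ A then 1 else 0)
          = (univ.filter fun A : Finset (Fin n) => A.card = a ∧ K.image ⇑π.symm ∪ K ⊆ A).card := by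
        rw [← Finset.card_filter, Finset.filter_filter]
        congr 1
        apply Finset.filter_congr
        intro A _
        rw [hcond A]
      rw [this, card_supersets _ a han]
      congr 2
      -- |K.image π.symm ∪ K| = 2r - |πK ∩ K|
      have h1 := Finset.card_union_add_card_inter (K.image ⇑π.symm) K
      have h2 : (K.image ⇑π.symm ∩ K).card = (K.image ⇑π ∩ K).card := by
        have himg : ((K.image ⇑π.symm ∩ K).image ⇑π).card = (K.image ⇑π.symm ∩ K).card :=
          image_card π _
        rw [← himg, image_inter_perm]
        have : (K.image ⇑π.symm).image ⇑π = K := by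
          rw [Finset.image_image]
          simp
        rw [this, Finset.inter_comm]
      have h3 : (K.image ⇑π ∩ K).card ≤ r := by
        rw [← hK]
        exact Finset.card_le_card Finset.inter_subset_right
      rw [image_card] at h1
      omega
    · simp [hK]
  rw [Finset.sum_congr rfl fun K _ => step K, ← Finset.sum_filter]
  -- finally, group the K's by |πK ∩ K|
  rw [← Finset.sum_fiberwise_of_maps_to (hmaps r)
    (fun K => (n - (2 * r - (K.image ⇑π ∩ K).card)).choose (n - a))]
  apply Finset.sum_congr rfl
  intro s _
  rw [Finset.filter_filter]
  trans (∑ _K ∈ univ.filter fun K : Finset (Fin n) =>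
      K.card = r ∧ (K.image ⇑π ∩ K).card = s, (n - (2 * r - s)).choose (n - a))
  · exact Finset.sum_congr rfl fun K hK => by
      rw [(Finset.mem_filter.1 hK).2.2]
  · unfold fD
    rw [Finset.sum_const, smul_eq_mul, mul_comm]

/-- diagonal values of the inner product -/
lemma Et_diag (chi : Equiv.Perm (Fin n) → ℝ) (d : ℕ)
    (hchiE : ∀ π, chi π = (cntD n d π : ℝ) - (if d = 0 then 0 else (cntD n (d - 1) π : ℝ)))
    (hd : 2 * d ≤ n) (b : ℕ) (hb : b ≤ d) :
    ∑ π : Equiv.Perm (Fin n), chi π * (fD n b b π : ℝ)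
      = if b = d then (n.factorial : ℝ) else 0 := by
  have hcast : ∀ j : ℕ, j ≤ d → ∑ π : Equiv.Perm (Fin n),
      (cntD n j π : ℝ) * (cntD n b π : ℝ) = ((min j b + 1 : ℕ) : ℝ) * (n.factorial : ℝ) := by
    intro j hj
    have hjb : j + b ≤ n := by omega
    have := sum_cnt_mul_cnt (n := n) j b hjb
    have hc := congrArg (Nat.cast : ℕ → ℝ) this
    push_cast at hc ⊢
    convert hc using 2
  simp only [hchiE, fD_diag]
  by_cases hd0 : d = 0
  · subst hd0
    have hb0 : b = 0 := le_antisymm hb (Nat.zero_le b)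
    subst hb0
    simp only [if_true, sub_zero, eq_self_iff_true]
    rw [hcast 0 le_rfl]
    norm_num
  · simp only [if_neg hd0]
    simp only [sub_mul, Finset.sum_sub_distrib]
    rw [hcast d le_rfl, hcast (d - 1) (Nat.sub_le d 1)]
    by_cases hbd : b = d
    · subst hbd
      rw [if_pos rfl]
      have h1 : min b b = b := min_self b
      have h2 : min (b - 1) b = b - 1 := min_eq_left (Nat.sub_le b 1)
      rw [h1, h2]
      have hb1 : b ≥ 1 := Nat.one_le_iff_ne_zero.2 hd0
      have : ((b + 1 : ℕ) : ℝ) - ((b - 1 + 1 : ℕ) : ℝ) = 1 := by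
        have : b - 1 + 1 = b := Nat.succ_pred_eq_of_pos hb1
        rw [this]
        push_cast
        ring
      rw [← sub_mul, this, one_mul]
    · rw [if_neg hbd]
      have hblt : b ≤ d - 1 := by omega
      have h1 : min d b = b := min_eq_right hb
      have h2 : min (d - 1) b = b := min_eq_right hblt
      rw [h1, h2, sub_self]

/-- the relation, multiplied by `chi` and summed -/
lemma Et_relation (chi : Equiv.Perm (Fin n) → ℝ) (a r : ℕ) (hra : r ≤ a) (han : a ≤ n) :
    ∑ k' ∈ Finset.range (a + 1), (k'.choose r : ℝ) *
        ∑ π : Equiv.Perm (Fin n), chi π * (fD n a k' π : ℝ)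
      = ∑ s ∈ Finset.range (r + 1), (((n - (2 * r - s)).choose (n - a) : ℕ) : ℝ) *
        ∑ π : Equiv.Perm (Fin n), chi π * (fD n r s π : ℝ) := by
  calc ∑ k' ∈ Finset.range (a + 1), (k'.choose r : ℝ) *
        ∑ π : Equiv.Perm (Fin n), chi π * (fD n a k' π : ℝ)
      = ∑ k' ∈ Finset.range (a + 1), ∑ π : Equiv.Perm (Fin n),
          (k'.choose r : ℝ) * (chi π * (fD n a k' π : ℝ)) := by
        apply Finset.sum_congr rfl
        intro k' _
        rw [Finset.mul_sum]
    _ = ∑ π : Equiv.Perm (Fin n), ∑ k' ∈ Finset.range (a + 1),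
          (k'.choose r : ℝ) * (chi π * (fD n a k' π : ℝ)) := Finset.sum_comm
    _ = ∑ π : Equiv.Perm (Fin n), chi π *
          ∑ k' ∈ Finset.range (a + 1), ((k'.choose r * fD n a k' π : ℕ) : ℝ) := by
        apply Finset.sum_congr rfl
        intro π _
        rw [Finset.mul_sum]
        apply Finset.sum_congr rfl
        intro k' _
        push_cast
        ring
    _ = ∑ π : Equiv.Perm (Fin n), chi π *
          ∑ s ∈ Finset.range (r + 1), (((n - (2 * r - s)).choose (n - a) * fD n r s π : ℕ) : ℝ) := by
        apply Finset.sum_congr rfl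
        intro π _
        congr 1
        rw [← Nat.cast_sum, ← Nat.cast_sum, f_relation π a r hra han]
    _ = ∑ s ∈ Finset.range (r + 1), ∑ π : Equiv.Perm (Fin n),
          (((n - (2 * r - s)).choose (n - a) : ℕ) : ℝ) * (chi π * (fD n r s π : ℝ)) := by
        rw [Finset.sum_comm]
        apply Finset.sum_congr rfl
        intro π _
        rw [Finset.mul_sum]
        apply Finset.sum_congr rfl
        intro s _
        push_cast
        ring
    _ = ∑ s ∈ Finset.range (r + 1), (((n - (2 * r - s)).choose (n - a) : ℕ) : ℝ) *
        ∑ π : Equiv.Perm (Fin n), chi π * (fD n r s π : ℝ) := by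
        apply Finset.sum_congr rfl
        intro s _
        rw [Finset.mul_sum]

lemma binom_id (d k : ℕ) (hk : k < d) :
    ∑ k' ∈ Finset.range (d + 1), ((-1 : ℝ)) ^ k' * (k'.choose k) * (d.choose k') = 0 := by
  have hsplit : ∑ k' ∈ Finset.range k, ((-1 : ℝ)) ^ k' * (k'.choose k) * (d.choose k')
      + ∑ k' ∈ Finset.Ico k (d + 1), ((-1 : ℝ)) ^ k' * (k'.choose k) * (d.choose k')
      = ∑ k' ∈ Finset.range (d + 1), ((-1 : ℝ)) ^ k' * (k'.choose k) * (d.choose k') :=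
    Finset.sum_range_add_sum_Ico _ (by omega)
  rw [← hsplit]
  have h1 : ∑ k' ∈ Finset.range k, ((-1 : ℝ)) ^ k' * (k'.choose k) * (d.choose k') = 0 := by
    apply Finset.sum_eq_zero
    intro k' hk'
    rw [Finset.mem_range] at hk'
    rw [Nat.choose_eq_zero_of_lt hk']
    simp
  rw [h1, zero_add, Finset.sum_Ico_eq_sum_range]
  have per : ∀ j ∈ Finset.range (d + 1 - k),
      ((-1 : ℝ)) ^ (k + j) * ((k + j).choose k) * (d.choose (k + j))
        = ((-1 : ℝ)) ^ k * (d.choose k) * (((-1 : ℝ)) ^ j * ((d - k).choose j)) := by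
    intro j hj
    rw [Finset.mem_range] at hj
    have hkj : k + j ≤ d := by omega
    have hmul := Nat.choose_mul (n := d) (Nat.le_add_right k j)
    rw [Nat.add_sub_cancel_left] at hmul
    have hmulR := congrArg (Nat.cast : ℕ → ℝ) hmul
    push_cast at hmulR
    rw [pow_add]
    linear_combination ((-1 : ℝ)) ^ k * ((-1 : ℝ)) ^ j * hmulR
  rw [Finset.sum_congr rfl per, ← Finset.mul_sum]
  have hrange : d + 1 - k = (d - k) + 1 := by omega
  rw [hrange]
  have halt : ∑ j ∈ Finset.range ((d - k) + 1), ((-1 : ℝ)) ^ j * ((d - k).choose j) = 0 := by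
    have := Int.alternating_sum_range_choose_of_ne (n := d - k) (by omega)
    exact_mod_cast congrArg (Int.cast : ℤ → ℝ) this
  rw [halt, mul_zero]

lemma Et_zero (chi : Equiv.Perm (Fin n) → ℝ) (d : ℕ)
    (hchiE : ∀ π, chi π = (cntD n d π : ℝ) - (if d = 0 then 0 else (cntD n (d - 1) π : ℝ)))
    (hd : 2 * d ≤ n) :
    ∀ a, a < d → ∀ k, k ≤ a → ∑ π : Equiv.Perm (Fin n), chi π * (fD n a k π : ℝ) = 0 := by
  intro a
  induction a using Nat.strong_induction_on with
  | _ a IH =>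
    intro had k hk
    have aux : ∀ m, ∀ k, k ≤ a → a - k ≤ m →
        ∑ π : Equiv.Perm (Fin n), chi π * (fD n a k π : ℝ) = 0 := by
      intro m
      induction m with
      | zero =>
        intro k hk h0
        have hka : k = a := by omega
        subst hka
        rw [Et_diag chi d hchiE hd k had.le, if_neg (Nat.ne_of_lt had)]
      | succ m IHm =>
        intro k hk hm
        by_cases hcase : a - k ≤ m
        · exact IHm k hk hcase
        · have hklt : k < a := by omega
          have hrel := Et_relation chi a k hklt.le (by omega : a ≤ n)
          have hz : ∑ s ∈ Finset.range (k + 1), (((n - (2 * k - s)).choose (n - a) : ℕ) : ℝ) *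
              ∑ π : Equiv.Perm (Fin n), chi π * (fD n k s π : ℝ) = 0 := by
            apply Finset.sum_eq_zero
            intro s hs
            rw [Finset.mem_range, Nat.lt_succ_iff] at hs
            rw [IH k hklt (hklt.trans had) s hs, mul_zero]
          rw [hz] at hrel
          have hone : ∑ k' ∈ Finset.range (a + 1), (k'.choose k : ℝ) *
              ∑ π : Equiv.Perm (Fin n), chi π * (fD n a k' π : ℝ)
              = (k.choose k : ℝ) * ∑ π : Equiv.Perm (Fin n), chi π * (fD n a k π : ℝ) := by
            apply Finset.sum_eq_single_of_mem k (by rw [Finset.mem_range]; omega)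
            intro k' hk' hne
            rw [Finset.mem_range, Nat.lt_succ_iff] at hk'
            rcases Nat.lt_or_ge k' k with hlt | hge
            · rw [Nat.choose_eq_zero_of_lt hlt]
              simp
            · have hgt : k' > k := lt_of_le_of_ne hge (Ne.symm hne)
              rw [IHm k' hk' (by omega), mul_zero]
          rw [hone, Nat.choose_self] at hrel
          simpa using hrel
    exact aux (a - k) k hk le_rfl

lemma Et_top (chi : Equiv.Perm (Fin n) → ℝ) (d : ℕ)
    (hchiE : ∀ π, chi π = (cntD n d π : ℝ) - (if d = 0 then 0 else (cntD n (d - 1) π : ℝ)))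
    (hd : 2 * d ≤ n) :
    ∀ k, k ≤ d → ∑ π : Equiv.Perm (Fin n), chi π * (fD n d k π : ℝ)
      = (-1 : ℝ) ^ (d + k) * (d.choose k) * (n.factorial : ℝ) := by
  have aux : ∀ m, ∀ k, k ≤ d → d - k ≤ m →
      ∑ π : Equiv.Perm (Fin n), chi π * (fD n d k π : ℝ)
        = (-1 : ℝ) ^ (d + k) * (d.choose k) * (n.factorial : ℝ) := by
    intro m
    induction m with
    | zero =>
      intro k hk h0
      have hkd : k = d := by omega
      subst hkd
      rw [Et_diag chi k hchiE hd k le_rfl, if_pos rfl, Nat.choose_self]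
      have : (-1 : ℝ) ^ (k + k) = 1 := by
        rw [← two_mul]
        exact Even.neg_one_pow ⟨k, two_mul k ▸ rfl⟩
      rw [this]
      norm_num
    | succ m IHm =>
      intro k hk hm
      by_cases hcase : d - k ≤ m
      · exact IHm k hk hcase
      · have hklt : k < d := by omega
        have hrel := Et_relation chi d k hklt.le (by omega : d ≤ n)
        have hz : ∑ s ∈ Finset.range (k + 1), (((n - (2 * k - s)).choose (n - d) : ℕ) : ℝ) *
            ∑ π : Equiv.Perm (Fin n), chi π * (fD n k s π : ℝ) = 0 := by
          apply Finset.sum_eq_zero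
          intro s hs
          rw [Finset.mem_range, Nat.lt_succ_iff] at hs
          rw [Et_zero chi d hchiE hd k hklt s hs, mul_zero]
        rw [hz] at hrel
        have key : ∑ k' ∈ Finset.range (d + 1), (k'.choose k : ℝ) *
            ((-1 : ℝ) ^ (d + k') * (d.choose k') * (n.factorial : ℝ)) = 0 := by
          have hb := binom_id d k hklt
          calc ∑ k' ∈ Finset.range (d + 1), (k'.choose k : ℝ) *
              ((-1 : ℝ) ^ (d + k') * (d.choose k') * (n.factorial : ℝ))
              = ((-1 : ℝ) ^ d * (n.factorial : ℝ)) *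
                ∑ k' ∈ Finset.range (d + 1), ((-1 : ℝ)) ^ k' * (k'.choose k) * (d.choose k') := by
                rw [Finset.mul_sum]
                apply Finset.sum_congr rfl
                intro k' _
                rw [pow_add]
                ring
            _ = 0 := by rw [hb, mul_zero]
        have hsub : ∑ k' ∈ Finset.range (d + 1), (k'.choose k : ℝ) *
            ((∑ π : Equiv.Perm (Fin n), chi π * (fD n d k' π : ℝ))
              - (-1 : ℝ) ^ (d + k') * (d.choose k') * (n.factorial : ℝ)) = 0 := by
          simp only [mul_sub]
          rw [Finset.sum_sub_distrib, hrel, key, sub_zero]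
        have hone : ∑ k' ∈ Finset.range (d + 1), (k'.choose k : ℝ) *
            ((∑ π : Equiv.Perm (Fin n), chi π * (fD n d k' π : ℝ))
              - (-1 : ℝ) ^ (d + k') * (d.choose k') * (n.factorial : ℝ))
            = (k.choose k : ℝ) * ((∑ π : Equiv.Perm (Fin n), chi π * (fD n d k π : ℝ))
              - (-1 : ℝ) ^ (d + k) * (d.choose k) * (n.factorial : ℝ)) := by
          apply Finset.sum_eq_single_of_mem k (by rw [Finset.mem_range]; omega)
          intro k' hk' hne
          rw [Finset.mem_range, Nat.lt_succ_iff] at hk'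
          rcases Nat.lt_or_ge k' k with hlt | hge
          · rw [Nat.choose_eq_zero_of_lt hlt]
            simp
          · have hgt : k' > k := lt_of_le_of_ne hge (Ne.symm hne)
            rw [IHm k' hk' (by omega), sub_self, mul_zero]
        rw [hone, Nat.choose_self, Nat.cast_one, one_mul] at hsub
        exact sub_eq_zero.1 hsub
  intro k hk
  exact aux (d - k) k hk le_rfl

/-- The inner product of the two-row character `χ_d = c_d − c_{d−1}` with the counting
function `f_{a,k}` vanishes when `a < d` and equals `(−1)^{d+k} C(d,k)` when `a = d`. -/
theorem character_f_inner_product (n d : ℕ) (hd : 2 * d ≤ n)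
    (c : ℕ → Equiv.Perm (Fin n) → ℕ)
    (hc : ∀ j π, c j π =
      (Finset.univ.filter fun A : Finset (Fin n) => A.card = j ∧ A.image π = A).card)
    (chi : Equiv.Perm (Fin n) → ℝ)
    (hchi : ∀ π, chi π = (c d π : ℝ) - (if d = 0 then 0 else (c (d - 1) π : ℝ)))
    (f : ℕ → ℕ → Equiv.Perm (Fin n) → ℕ)
    (hf : ∀ a k σ, f a k σ = (Finset.univ.filter fun A : Finset (Fin n) =>
      A.card = a ∧ (A.image σ ∩ A).card = k).card)
    (a k : ℕ) (hka : k ≤ a) (had : a ≤ d) :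
    (a < d →
      (1 / (n.factorial : ℝ)) * ∑ π : Equiv.Perm (Fin n), chi π * (f a k π : ℝ) = 0) ∧
    (a = d →
      (1 / (n.factorial : ℝ)) * ∑ π : Equiv.Perm (Fin n), chi π * (f a k π : ℝ) =
        (-1) ^ (d + k) * (d.choose k : ℝ)) := by
  have hcE : ∀ j π, c j π = cntD n j π := fun j π => (hc j π).trans rfl
  have hfE : ∀ a k π, f a k π = fD n a k π := fun a k π => (hf a k π).trans rfl
  have hchiE : ∀ π, chi π = (cntD n d π : ℝ) - (if d = 0 then 0 else (cntD n (d - 1) π : ℝ)) := by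
    intro π
    rw [hchi π, hcE d π, hcE (d - 1) π]
  constructor
  · intro hlt
    have hz := Et_zero chi d hchiE hd a hlt k hka
    simp only [hfE]
    rw [hz, mul_zero]
  · intro heq
    subst heq
    have ht := Et_top chi a hchiE hd k hka
    simp only [hfE]
    rw [ht]
    have hfac : (n.factorial : ℝ) ≠ 0 := Nat.cast_ne_zero.2 (Nat.factorial_ne_zero n)
    field_simp
end
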